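/- arXiv:2012.03795 — 6 statements merged into one kernel-verified Lean document; each statement's English description precedes it below -/
import Mathlib

section
/- Let h : [-1,1] → ℝ be C¹ and ε ∈ {-1,1}. A point (x₀,y₀) in the phase plane Θ = (0,∞) × (-1,1) is an equilibrium of the system, i.e. F_ε(x₀,y₀) = (0,0), if and only if y₀ = 0, 2ε·h(0) > 1, and tanh(x₀) = 1/(2ε·h(0)). In particular, when 2ε·h(0) > 1 there is exactly one equilibrium, namely (arctanh(1/(2ε·h(0))), 0), and when 2ε·h(0) ≤ 1 there are none. -/
open Filter Set

lemma tanh_formula (x : ℝ) :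
    Real.tanh x = (Real.exp (2*x) - 1) / (Real.exp (2*x) + 1) := by
  rw [Real.tanh_eq_sinh_div_cosh, Real.sinh_eq, Real.cosh_eq, Real.exp_neg,
    show (2:ℝ)*x = x + x by ring, Real.exp_add]
  have h1 := Real.exp_pos x
  have h2 : Real.exp x * Real.exp x + 1 > 0 := by positivity
  field_simp

lemma tanh_mem_Ioo {x : ℝ} (hx : 0 < x) : Real.tanh x ∈ Set.Ioo (0:ℝ) 1 := by
  rw [tanh_formula]
  have h1 : 1 < Real.exp (2*x) := Real.one_lt_exp_iff.mpr (by linarith)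
  constructor
  · apply div_pos <;> linarith
  · rw [div_lt_one (by linarith)]; linarith

lemma tanh_eq_iff {x c : ℝ} (hc0 : -1 < c) (hc : c < 1) :
    Real.tanh x = c ↔ x = Real.log ((1+c)/(1-c)) / 2 := by
  have hpos : (0:ℝ) < (1+c)/(1-c) := by
    apply div_pos <;> linarith
  rw [tanh_formula]
  have he := Real.exp_pos (2*x)
  rw [div_eq_iff (by linarith)]
  constructor
  · intro h
    have hx : Real.exp (2*x) = (1+c)/(1-c) := by
      rw [eq_div_iff (by linarith)]; nlinarith
    have : 2*x = Real.log ((1+c)/(1-c)) := by rw [← hx, Real.log_exp]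
    linarith
  · intro h
    have hx : Real.exp (2*x) = (1+c)/(1-c) := by
      rw [show 2*x = Real.log ((1+c)/(1-c)) by linarith, Real.exp_log hpos]
    have h1c : (1:ℝ) - c ≠ 0 := by linarith
    rw [hx]
    field_simp
    ring

/-- The vector field `F_ε` of the phase plane system: `F_ε(x,y) =
(y, (1-y²)/tanh x − 2ε·h(y)·√(1-y²))`. -/
noncomputable def F (h : ℝ → ℝ) (ε : ℝ) (p : ℝ × ℝ) : ℝ × ℝ :=
  (p.2, (1 - p.2 ^ 2) / Real.tanh p.1 - 2 * ε * h p.2 * Real.sqrt (1 - p.2 ^ 2))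

/-- The phase plane `Θ = (0,∞) × (-1,1)`. -/
def PhasePlane : Set (ℝ × ℝ) := Set.Ioi (0 : ℝ) ×ˢ Set.Ioo (-1 : ℝ) 1

/-- `γ` is an orbit of `F_ε` on the open interval `I`: it takes values in `Θ` and solves
`γ' = F_ε ∘ γ` on `I`. -/
def IsOrbitOn (h : ℝ → ℝ) (ε : ℝ) (γ : ℝ → ℝ × ℝ) (I : Set ℝ) : Prop :=
  IsOpen I ∧ I.OrdConnected ∧ ∀ s ∈ I, γ s ∈ PhasePlane ∧ HasDerivAt γ (F h ε (γ s)) s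

/-- A maximal orbit: an orbit admitting no extension to a solution on a strictly
larger interval. -/
def IsMaxOrbitOn (h : ℝ → ℝ) (ε : ℝ) (γ : ℝ → ℝ × ℝ) (I : Set ℝ) : Prop :=
  IsOrbitOn h ε γ I ∧
    ∀ (δ : ℝ → ℝ × ℝ) (J : Set ℝ), IsOrbitOn h ε δ J → I ⊆ J → Set.EqOn δ γ I → J = I

/-- The open interval of reals with (possibly infinite) extended-real endpoints. -/
def EIoo (a b : EReal) : Set ℝ := {s : ℝ | a < (s : EReal) ∧ (s : EReal) < b}

/-- The inverse hyperbolic tangent. -/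
noncomputable def arctanh (x : ℝ) : ℝ := Real.log ((1 + x) / (1 - x)) / 2

/-- a point of the phase plane is an equilibrium of `F_ε` iff `y₀ = 0`,
`2ε·h(0) > 1` and `tanh x₀ = 1/(2ε·h(0))`; in particular for `2ε·h(0) > 1` there is
exactly one equilibrium, namely `(arctanh (1/(2ε·h 0)), 0)`, and for `2ε·h(0) ≤ 1` none. -/
theorem stmt0 (h : ℝ → ℝ) (hC : ContDiffOn ℝ 1 h (Set.Icc (-1 : ℝ) 1))
    (ε : ℝ) (hε : ε = 1 ∨ ε = -1) :
    (∀ x₀ y₀ : ℝ, (x₀, y₀) ∈ PhasePlane →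
      (F h ε (x₀, y₀) = (0, 0) ↔
        y₀ = 0 ∧ 1 < 2 * ε * h 0 ∧ Real.tanh x₀ = 1 / (2 * ε * h 0))) ∧
    (1 < 2 * ε * h 0 →
      (arctanh (1 / (2 * ε * h 0)), (0 : ℝ)) ∈ PhasePlane ∧
      F h ε (arctanh (1 / (2 * ε * h 0)), 0) = (0, 0) ∧
      ∀ p ∈ PhasePlane, F h ε p = (0, 0) → p = (arctanh (1 / (2 * ε * h 0)), 0)) ∧
    (2 * ε * h 0 ≤ 1 → ∀ p ∈ PhasePlane, F h ε p ≠ (0, 0)) := by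
  have main : ∀ x₀ y₀ : ℝ, (x₀, y₀) ∈ PhasePlane →
      (F h ε (x₀, y₀) = (0, 0) ↔
        y₀ = 0 ∧ 1 < 2 * ε * h 0 ∧ Real.tanh x₀ = 1 / (2 * ε * h 0)) := by
    intro x₀ y₀ hp
    obtain ⟨hx, hy⟩ := hp
    simp only [Set.mem_Ioi] at hx
    obtain ⟨ht0, ht1⟩ := tanh_mem_Ioo hx
    simp only [F, Prod.mk.injEq]
    constructor
    · rintro ⟨hy0, heq⟩
      subst hy0
      norm_num at heq
      -- heq : 1 / Real.tanh x₀ - 2 * ε * h 0 = 0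
      have h2 : 2 * ε * h 0 = (Real.tanh x₀)⁻¹ := by linarith
      have h4 : Real.tanh x₀ * (Real.tanh x₀)⁻¹ = 1 := mul_inv_cancel₀ (ne_of_gt ht0)
      have h3 : 1 < (Real.tanh x₀)⁻¹ := by nlinarith
      refine ⟨rfl, by linarith, ?_⟩
      rw [h2, one_div, inv_inv]
    · rintro ⟨hy0, hgt, htanh⟩
      subst hy0
      have hne : 2 * ε * h 0 ≠ 0 := by linarith
      refine ⟨rfl, ?_⟩
      norm_num [htanh]
  refine ⟨main, ?_, ?_⟩
  · intro hgt
    set c : ℝ := 1 / (2 * ε * h 0) with hc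
    have hc0 : 0 < c := by positivity
    have hc1 : c < 1 := by
      rw [hc, div_lt_one (by linarith)]; linarith
    have hmem : (arctanh c, (0:ℝ)) ∈ PhasePlane := by
      constructor
      · simp only [Set.mem_Ioi, arctanh]
        have : (1:ℝ) < (1 + c) / (1 - c) := by
          rw [lt_div_iff₀ (by linarith)]; linarith
        have := Real.log_pos this
        linarith
      · exact ⟨by norm_num, by norm_num⟩
    have htanh : Real.tanh (arctanh c) = c :=
      (tanh_eq_iff (by linarith) hc1).mpr rfl
    refine ⟨hmem, ?_, ?_⟩
    · exact (main _ _ hmem).mpr ⟨rfl, hgt, htanh⟩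
    · rintro ⟨x₀, y₀⟩ hp hF
      obtain ⟨hy0, -, ht⟩ := (main _ _ hp).mp hF
      subst hy0
      have : x₀ = arctanh c := (tanh_eq_iff (by linarith) hc1).mp ht
      rw [this]
  · intro hle p hp hF
    obtain ⟨hy0, hgt, -⟩ := (main p.1 p.2 hp).mp (by exact hF)
    linarith
end

section
/- Let h : [-1,1] → ℝ be C¹ and ε ∈ {-1,1}. Suppose γ = (x,y) : (a,∞) → Θ is a solution of γ'(s) = F_ε(γ(s)) such that x(s) → ∞ and y(s) → y₀ for some y₀ ∈ (-1,1) as s → ∞. Then 2ε·h(y₀) = √(1-y₀²). The same conclusion holds for a solution on (-∞,b) with x(s) → ∞ and y(s) → y₀ ∈ (-1,1) as s → -∞. -/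
open Filter Set

lemma tanh_tendsto_one : Tendsto Real.tanh atTop (nhds 1) := by
  have key : ∀ x : ℝ, Real.tanh x =
      (1 - Real.exp (-x) * Real.exp (-x)) / (1 + Real.exp (-x) * Real.exp (-x)) := by
    intro x
    have hu : Real.exp x ≠ 0 := (Real.exp_pos x).ne'
    rw [Real.tanh_eq_sinh_div_cosh, Real.sinh_eq, Real.cosh_eq, Real.exp_neg]
    rw [div_eq_div_iff (by positivity) (by positivity)]
    field_simp
  have h0 : Tendsto (fun x : ℝ => Real.exp (-x) * Real.exp (-x)) atTop (nhds 0) := by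
    simpa using Real.tendsto_exp_neg_atTop_nhds_zero.mul Real.tendsto_exp_neg_atTop_nhds_zero
  have c1 : Tendsto (fun _ : ℝ => (1 : ℝ)) atTop (nhds 1) := tendsto_const_nhds
  have := ((c1.sub h0).div (c1.add h0) (by norm_num))
  simp only [sub_zero, add_zero, div_one] at this
  exact Tendsto.congr (fun x => (key x).symm) this

/-- If `f' = g` on `(a,∞)`, `g → L` at `+∞`, and `f` converges at `+∞`, then `L = 0`. -/
lemma deriv_limit_zero_atTop (f g : ℝ → ℝ) (a L c : ℝ)
    (hf : ∀ s ∈ Ioi a, HasDerivAt f (g s) s)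
    (hg : Tendsto g atTop (nhds L)) (hfc : Tendsto f atTop (nhds c)) : L = 0 := by
  have h1 : Tendsto (fun s => f (s + 1) - f s) atTop (nhds 0) := by
    have := (hfc.comp (tendsto_atTop_add_const_right atTop 1 tendsto_id)).sub hfc
    simpa using this
  have h2 : Tendsto (fun s => f (s + 1) - f s) atTop (nhds L) := by
    rw [Metric.tendsto_atTop] at hg ⊢
    intro δ hδ
    obtain ⟨N, hN⟩ := hg δ hδ
    refine ⟨max N (a + 1), fun s hs => ?_⟩
    have hsa : a < s := lt_of_lt_of_le (by linarith) (le_of_max_le_right hs)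
    have hcont : ContinuousOn f (Icc s (s + 1)) := fun t ht =>
      (hf t (lt_of_lt_of_le hsa ht.1)).continuousAt.continuousWithinAt
    have hder : ∀ t ∈ Ioo s (s + 1), HasDerivAt f (g t) t := fun t ht =>
      hf t (hsa.trans ht.1)
    obtain ⟨ξ, hξ, hgξ⟩ := exists_hasDerivAt_eq_slope f g (by linarith : s < s + 1) hcont hder
    have : f (s + 1) - f s = g ξ := by rw [hgξ]; ring
    rw [this]
    exact hN ξ (le_trans (le_max_left N (a + 1)) (le_of_lt (lt_of_le_of_lt hs hξ.1)))
  have := tendsto_nhds_unique h2 h1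
  exact this

lemma deriv_limit_zero_atBot (f g : ℝ → ℝ) (b L c : ℝ)
    (hf : ∀ s ∈ Iio b, HasDerivAt f (g s) s)
    (hg : Tendsto g atBot (nhds L)) (hfc : Tendsto f atBot (nhds c)) : L = 0 := by
  have hneg : ∀ s ∈ Ioi (-b), HasDerivAt (fun t => f (-t)) (-g (-s)) s := by
    intro s hs
    have : -s ∈ Iio b := by simp only [mem_Ioi] at hs; simpa using by linarith
    simpa [mul_comm, Function.comp_def] using (hf _ this).comp s (hasDerivAt_neg s)
  have hg' : Tendsto (fun s => -g (-s)) atTop (nhds (-L)) :=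
    ((hg.comp tendsto_neg_atTop_atBot).neg)
  have hfc' : Tendsto (fun s => f (-s)) atTop (nhds c) := hfc.comp tendsto_neg_atTop_atBot
  have := deriv_limit_zero_atTop (fun t => f (-t)) (fun s => -g (-s)) (-b) (-L) c hneg hg' hfc'
  linarith

lemma hasDerivAt_snd' {γ : ℝ → ℝ × ℝ} {v : ℝ × ℝ} {s : ℝ} (hγ : HasDerivAt γ v s) :
    HasDerivAt (fun t => (γ t).2) v.2 s := by
  have h' := ((ContinuousLinearMap.snd ℝ ℝ ℝ).hasFDerivAt).comp s hγ.hasFDerivAt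
  simpa [Function.comp_def] using h'.hasDerivAt

/-- Core argument, shared by both directions. -/
lemma limit_eq (h : ℝ → ℝ) (hC : ContDiffOn ℝ 1 h (Set.Icc (-1 : ℝ) 1))
    (ε : ℝ) (y₀ : ℝ) (hy₀ : y₀ ∈ Set.Ioo (-1 : ℝ) 1)
    (hL : 1 - y₀ ^ 2 - 2 * ε * h y₀ * Real.sqrt (1 - y₀ ^ 2) = 0) :
    2 * ε * h y₀ = Real.sqrt (1 - y₀ ^ 2) := by
  have hpos : 0 < 1 - y₀ ^ 2 := by nlinarith [hy₀.1, hy₀.2]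
  have hs : Real.sqrt (1 - y₀ ^ 2) > 0 := Real.sqrt_pos.mpr hpos
  have hsq : Real.sqrt (1 - y₀ ^ 2) ^ 2 = 1 - y₀ ^ 2 := Real.sq_sqrt hpos.le
  have : (2 * ε * h y₀ - Real.sqrt (1 - y₀ ^ 2)) * Real.sqrt (1 - y₀ ^ 2) = 0 := by
    nlinarith
  rcases mul_eq_zero.mp this with h1 | h1
  · linarith
  · exact absurd h1 hs.ne'

lemma g_tendsto (h : ℝ → ℝ) (hC : ContDiffOn ℝ 1 h (Set.Icc (-1 : ℝ) 1))
    (ε : ℝ) (y₀ : ℝ) (hy₀ : y₀ ∈ Set.Ioo (-1 : ℝ) 1) (γ : ℝ → ℝ × ℝ) (l : Filter ℝ)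
    (hx : Tendsto (fun s => (γ s).1) l atTop)
    (hy : Tendsto (fun s => (γ s).2) l (nhds y₀)) :
    Tendsto (fun s => (F h ε (γ s)).2) l
      (nhds (1 - y₀ ^ 2 - 2 * ε * h y₀ * Real.sqrt (1 - y₀ ^ 2))) := by
  have htanh : Tendsto (fun s => Real.tanh (γ s).1) l (nhds 1) := tanh_tendsto_one.comp hx
  have c1 : Tendsto (fun _ : ℝ => (1 : ℝ)) l (nhds 1) := tendsto_const_nhds
  have h1 : Tendsto (fun s => 1 - (γ s).2 ^ 2) l (nhds (1 - y₀ ^ 2)) :=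
    c1.sub (hy.pow 2)
  have hh : Tendsto (fun s => h (γ s).2) l (nhds (h y₀)) := by
    have hcont : ContinuousAt h y₀ :=
      (hC.continuousOn).continuousAt (Icc_mem_nhds hy₀.1 hy₀.2)
    exact hcont.tendsto.comp hy
  have hsqrt : Tendsto (fun s => Real.sqrt (1 - (γ s).2 ^ 2)) l
      (nhds (Real.sqrt (1 - y₀ ^ 2))) :=
    (Real.continuous_sqrt.tendsto _).comp h1
  have hc : Tendsto (fun _ : ℝ => 2 * ε) l (nhds (2 * ε)) := tendsto_const_nhds
  have := (h1.div htanh one_ne_zero).sub ((hc.mul hh).mul hsqrt)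
  simpa [F] using this

/-- if an orbit satisfies `x(s) → ∞` and `y(s) → y₀ ∈ (-1,1)` as `s → ∞`
(or `s → -∞`), then `2ε·h(y₀) = √(1-y₀²)`. -/
theorem stmt2 (h : ℝ → ℝ) (hC : ContDiffOn ℝ 1 h (Set.Icc (-1 : ℝ) 1))
    (ε : ℝ) (hε : ε = 1 ∨ ε = -1) (y₀ : ℝ) (hy₀ : y₀ ∈ Set.Ioo (-1 : ℝ) 1) :
    (∀ (a : ℝ) (γ : ℝ → ℝ × ℝ), IsOrbitOn h ε γ (Set.Ioi a) →
      Filter.Tendsto (fun s => (γ s).1) Filter.atTop Filter.atTop →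
      Filter.Tendsto (fun s => (γ s).2) Filter.atTop (nhds y₀) →
      2 * ε * h y₀ = Real.sqrt (1 - y₀ ^ 2)) ∧
    (∀ (b : ℝ) (γ : ℝ → ℝ × ℝ), IsOrbitOn h ε γ (Set.Iio b) →
      Filter.Tendsto (fun s => (γ s).1) Filter.atBot Filter.atTop →
      Filter.Tendsto (fun s => (γ s).2) Filter.atBot (nhds y₀) →
      2 * ε * h y₀ = Real.sqrt (1 - y₀ ^ 2)) := by
  constructor
  · intro a γ horb hx hy
    have hder : ∀ s ∈ Ioi a, HasDerivAt (fun t => (γ t).2) ((F h ε (γ s)).2) s :=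
      fun s hs => hasDerivAt_snd' (horb.2.2 s hs).2
    have hg := g_tendsto h hC ε y₀ hy₀ γ atTop hx hy
    have hL := deriv_limit_zero_atTop _ _ a _ y₀ hder hg hy
    exact limit_eq h hC ε y₀ hy₀ hL
  · intro b γ horb hx hy
    have hder : ∀ s ∈ Iio b, HasDerivAt (fun t => (γ t).2) ((F h ε (γ s)).2) s :=
      fun s hs => hasDerivAt_snd' (horb.2.2 s hs).2
    have hg := g_tendsto h hC ε y₀ hy₀ γ atBot hx hy
    have hL := deriv_limit_zero_atBot _ _ b _ y₀ hder hg hy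
    exact limit_eq h hC ε y₀ hy₀ hL
end

section
/- Let h : [-1,1] → ℝ be C¹ and ε ∈ {-1,1}. There is no orbit γ = (x,y) : (a,b) → Θ of the system γ' = F_ε∘γ (with -∞ ≤ a < b ≤ ∞) such that γ(s) converges, as s → b⁻ or as s → a⁺, to a point (0, y₀) with |y₀| < 1. -/
open Filter Set

private lemma stmt3_core (h : ℝ → ℝ) (ε C r y₀ : ℝ) (hε : ε = 1 ∨ ε = -1) (hC : 0 ≤ C)
    (hbd : ∀ u : ℝ, |u| ≤ 1 → |h u| ≤ C)
    (hr1 : r < 1) (hry : |y₀| < r)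
    (l : Filter ℝ) [hl : l.NeBot] (J : Set ℝ) (hJc : Convex ℝ J) (hJo : IsOpen J)
    (hmem : ∀ᶠ s in l, s ∈ J)
    (hfut : ∀ s ∈ J, ∀ᶠ t in l, s < t)
    (x y : ℝ → ℝ)
    (hxpos : ∀ s ∈ J, 0 < x s)
    (hyr : ∀ s ∈ J, |y s| < r)
    (htanh : ∀ s ∈ J, Real.tanh (x s) < (1 - r^2)/(2*C+1))
    (hdx : ∀ s ∈ J, HasDerivAt x (y s) s)
    (hdy : ∀ s ∈ J, HasDerivAt y
      ((1 - (y s)^2)/Real.tanh (x s) - 2*ε*h (y s)*Real.sqrt (1 - (y s)^2)) s)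
    (hx0 : Tendsto x l (nhds 0)) (hy0 : Tendsto y l (nhds y₀)) : False := by
  have hr0 : 0 < r := lt_of_le_of_lt (abs_nonneg y₀) hry
  have hcpos : 0 < 1 - r^2 := by nlinarith
  have h2C : (0:ℝ) < 2*C+1 := by linarith
  have hεabs : |ε| = 1 := by rcases hε with rfl | rfl <;> simp
  have habs : ∀ s ∈ J, |2*ε*h (y s)*Real.sqrt (1 - (y s)^2)| ≤ 2*C := by
    intro s hs
    have h1 : |h (y s)| ≤ C := hbd _ (((hyr s hs).trans hr1).le)
    have h2 : Real.sqrt (1 - (y s)^2) ≤ 1 := Real.sqrt_le_one.mpr (by nlinarith [sq_nonneg (y s)])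
    have h3 : 0 ≤ Real.sqrt (1 - (y s)^2) := Real.sqrt_nonneg _
    rw [abs_mul, abs_mul, abs_mul, hεabs, abs_of_nonneg h3, abs_two]
    nlinarith [abs_nonneg (h (y s))]
  have htanhpos : ∀ s ∈ J, 0 < Real.tanh (x s) := by
    intro s hs
    rw [Real.tanh_eq_sinh_div_cosh]
    exact div_pos (Real.sinh_pos_iff.mpr (hxpos s hs)) (Real.cosh_pos _)
  have hg1 : ∀ s ∈ J,
      1 ≤ (1 - (y s)^2)/Real.tanh (x s) - 2*ε*h (y s)*Real.sqrt (1 - (y s)^2) := by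
    intro s hs
    have hT := htanhpos s hs
    have hy2 : (y s)^2 < r^2 := by nlinarith [hyr s hs, abs_nonneg (y s), sq_abs (y s)]
    have hratio : 2*C+1 < (1 - (y s)^2)/Real.tanh (x s) := by
      rw [lt_div_iff₀ hT]
      have h5 := (lt_div_iff₀ h2C).1 (htanh s hs)
      nlinarith
    have h6 := (abs_le.1 (habs s hs)).2
    linarith
  have hymono : StrictMonoOn y J := by
    apply strictMonoOn_of_deriv_pos hJc
    · intro s hs
      exact (hdy s hs).differentiableAt.continuousAt.continuousWithinAt
    · intro s hs
      rw [hJo.interior_eq] at hs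
      rw [(hdy s hs).deriv]
      linarith [hg1 s hs]
  have hylt : ∀ s ∈ J, y s < y₀ := by
    intro s hs
    obtain ⟨s', hs'J, hss'⟩ := (hmem.and (hfut s hs)).exists
    have hev : ∀ᶠ t in l, y s' ≤ y t :=
      (hmem.and (hfut s' hs'J)).mono fun t ht => (hymono hs'J ht.1 ht.2).le
    exact lt_of_lt_of_le (hymono hs hs'J hss') (ge_of_tendsto hy0 hev)
  rcases le_or_gt y₀ 0 with hy₀neg | hy₀pos
  · -- energy argument
    have hyneg : ∀ s ∈ J, y s < 0 := fun s hs => lt_of_lt_of_le (hylt s hs) hy₀neg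
    set φ : ℝ → ℝ := fun s =>
      (y s)^2/2 - (1-r^2)*Real.log (Real.sinh (x s)) + 2*C*(x s) with hφdef
    have hφd : ∀ s ∈ J, HasDerivAt φ
        ((y s) * ((1 - (y s)^2)/Real.tanh (x s) - 2*ε*h (y s)*Real.sqrt (1 - (y s)^2))
          - (1-r^2)*((Real.cosh (x s) * y s)/Real.sinh (x s)) + 2*C*(y s)) s := by
      intro s hs
      have hsinh : 0 < Real.sinh (x s) := Real.sinh_pos_iff.mpr (hxpos s hs)
      have d1 := ((hdy s hs).pow 2).div_const 2
      have d2 := (((hdx s hs).sinh).log hsinh.ne')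
      have d3 := (hdx s hs).const_mul (2*C)
      have d4 := (d1.sub (d2.const_mul (1-r^2))).add d3
      refine d4.congr_deriv ?_
      push_cast
      ring
    have hφ'le : ∀ s ∈ J,
        (y s) * ((1 - (y s)^2)/Real.tanh (x s) - 2*ε*h (y s)*Real.sqrt (1 - (y s)^2))
          - (1-r^2)*((Real.cosh (x s) * y s)/Real.sinh (x s)) + 2*C*(y s) ≤ 0 := by
      intro s hs
      have hsinh : 0 < Real.sinh (x s) := Real.sinh_pos_iff.mpr (hxpos s hs)
      have hcosh : 0 < Real.cosh (x s) := Real.cosh_pos _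
      have hA := (abs_le.1 (habs s hs)).2
      have hy2 : (y s)^2 < r^2 := by nlinarith [hyr s hs, abs_nonneg (y s), sq_abs (y s)]
      have key : (y s) * ((1 - (y s)^2)/Real.tanh (x s) - 2*ε*h (y s)*Real.sqrt (1 - (y s)^2))
          - (1-r^2)*((Real.cosh (x s) * y s)/Real.sinh (x s)) + 2*C*(y s)
          = (y s * Real.cosh (x s)/Real.sinh (x s)) * (1 - (y s)^2 - (1-r^2))
            + y s * (2*C - 2*ε*h (y s)*Real.sqrt (1 - (y s)^2)) := by
        rw [Real.tanh_eq_sinh_div_cosh]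
        field_simp
        ring
      rw [key]
      have t0 : y s * Real.cosh (x s) ≤ 0 :=
        mul_nonpos_of_nonpos_of_nonneg (hyneg s hs).le hcosh.le
      have t1 : y s * Real.cosh (x s)/Real.sinh (x s) ≤ 0 :=
        div_nonpos_iff.mpr (Or.inr ⟨t0, hsinh.le⟩)
      have t2 : (0:ℝ) ≤ 1 - (y s)^2 - (1-r^2) := by nlinarith
      have t3 : y s * (2*C - 2*ε*h (y s)*Real.sqrt (1 - (y s)^2)) ≤ 0 :=
        mul_nonpos_of_nonpos_of_nonneg (hyneg s hs).le (by linarith)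
      nlinarith [mul_nonpos_of_nonpos_of_nonneg t1 t2]
    have hanti : AntitoneOn φ J := by
      apply antitoneOn_of_deriv_nonpos hJc
      · intro s hs
        exact (hφd s hs).differentiableAt.continuousAt.continuousWithinAt
      · intro s hs
        rw [hJo.interior_eq] at hs
        exact (hφd s hs).differentiableAt.differentiableWithinAt
      · intro s hs
        rw [hJo.interior_eq] at hs
        rw [(hφd s hs).deriv]
        exact hφ'le s hs
    obtain ⟨s₁, hs₁⟩ := hmem.exists
    have hub : ∀ᶠ t in l, φ t ≤ φ s₁ :=
      (hmem.and (hfut s₁ hs₁)).mono fun t ht => hanti hs₁ ht.1 ht.2.le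
    have hsinht : Tendsto (fun t => Real.sinh (x t)) l (nhdsWithin 0 (Ioi 0)) := by
      apply tendsto_nhdsWithin_of_tendsto_nhds_of_eventually_within
      · have h7 := (Real.continuous_sinh.tendsto 0).comp hx0
        simpa [Function.comp_def] using h7
      · exact hmem.mono fun s hs => Real.sinh_pos_iff.mpr (hxpos s hs)
    have hlog : Tendsto (fun t => Real.log (Real.sinh (x t))) l atBot :=
      Real.tendsto_log_nhdsGT_zero.comp hsinht
    have hpart : Tendsto (fun t => (-(1-r^2)) * Real.log (Real.sinh (x t))) l atTop :=
      hlog.const_mul_atBot_of_neg (by linarith)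
    have hbdd : Tendsto (fun t => (y t)^2/2 + 2*C*(x t)) l (nhds (y₀^2/2 + 2*C*0)) :=
      ((hy0.pow 2).div_const 2).add (hx0.const_mul (2*C))
    have htop : Tendsto φ l atTop := by
      have h8 := hbdd.add_atTop hpart
      apply h8.congr
      intro t
      simp only [hφdef]
      ring
    obtain ⟨t, h1, h2⟩ := ((htop.eventually_gt_atTop (φ s₁)).and hub).exists
    linarith
  · -- x increasing toward 0, contradiction
    have hev2 : ∀ᶠ t in l, y₀/2 < y t := hy0.eventually_const_lt (half_lt_self hy₀pos)
    obtain ⟨s₂, hs₂J, hs₂y⟩ := (hmem.and hev2).exists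
    have hJ'c : Convex ℝ (J ∩ Ioi s₂) := hJc.inter (convex_Ioi _)
    have hJ'o : IsOpen (J ∩ Ioi s₂) := hJo.inter isOpen_Ioi
    have hypos : ∀ t ∈ J ∩ Ioi s₂, 0 < y t := by
      intro t ht
      have := hymono hs₂J ht.1 ht.2
      linarith
    have hxmono : StrictMonoOn x (J ∩ Ioi s₂) := by
      apply strictMonoOn_of_deriv_pos hJ'c
      · intro t ht
        exact (hdx t ht.1).differentiableAt.continuousAt.continuousWithinAt
      · intro t ht
        rw [hJ'o.interior_eq] at ht
        rw [(hdx t ht.1).deriv]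
        exact hypos t ht
    obtain ⟨s₃, hs₃J, hs₃gt⟩ := (hmem.and (hfut s₂ hs₂J)).exists
    obtain ⟨s₄, hs₄J, hs₄gt⟩ := (hmem.and (hfut s₃ hs₃J)).exists
    have hs₄J' : s₄ ∈ J ∩ Ioi s₂ := ⟨hs₄J, lt_trans hs₃gt hs₄gt⟩
    have hev3 : ∀ᶠ t in l, x s₄ ≤ x t :=
      (hmem.and (hfut s₄ hs₄J)).mono fun t ht =>
        (hxmono hs₄J' ⟨ht.1, lt_trans hs₄J'.2 ht.2⟩ ht.2).le
    have h9 := ge_of_tendsto hx0 hev3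
    linarith [hxpos s₄ hs₄J]

/-- no orbit on an interval `(a,b)` (with `-∞ ≤ a < b ≤ ∞`) converges, as
`s → b⁻` or as `s → a⁺`, to a point `(0, y₀)` with `|y₀| < 1`. -/
theorem stmt3 (h : ℝ → ℝ) (hC : ContDiffOn ℝ 1 h (Set.Icc (-1 : ℝ) 1))
    (ε : ℝ) (hε : ε = 1 ∨ ε = -1) :
    ∀ (a b : EReal), a < b → ∀ γ : ℝ → ℝ × ℝ, IsOrbitOn h ε γ (EIoo a b) →
      ∀ y₀ : ℝ, |y₀| < 1 →
        ¬ Filter.Tendsto γ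
            (Filter.comap (fun s : ℝ => (s : EReal)) (nhdsWithin b (Set.Iio b)))
            (nhds ((0 : ℝ), y₀)) ∧
        ¬ Filter.Tendsto γ
            (Filter.comap (fun s : ℝ => (s : EReal)) (nhdsWithin a (Set.Ioi a)))
            (nhds ((0 : ℝ), y₀)) := by
  intro a b hab γ horb y₀ hy₀
  obtain ⟨C, hCb⟩ :=
    (isCompact_Icc : IsCompact (Icc (-1:ℝ) 1)).exists_bound_of_continuousOn hC.continuousOn
  have hC0 : 0 ≤ C := le_trans (norm_nonneg _) (hCb 0 (by norm_num))
  have hbd : ∀ u : ℝ, |u| ≤ 1 → |h u| ≤ C := by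
    intro u hu
    have h1 := hCb u (abs_le.1 hu)
    rwa [Real.norm_eq_abs] at h1
  have htanhcont : Continuous Real.tanh := by
    have h2 : Real.tanh = fun x => Real.sinh x / Real.cosh x :=
      funext fun x => Real.tanh_eq_sinh_div_cosh x
    rw [h2]
    exact Real.continuous_sinh.div Real.continuous_cosh fun x => (Real.cosh_pos x).ne'
  set r : ℝ := (|y₀| + 1)/2 with hrdef
  have hr1 : r < 1 := by rw [hrdef]; linarith
  have hry : |y₀| < r := by rw [hrdef]; linarith
  have hrpos : (0:ℝ) < (1 - r^2)/(2*C+1) := by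
    apply div_pos _ (by linarith)
    have : 0 < r := lt_of_le_of_lt (abs_nonneg y₀) hry
    nlinarith
  constructor
  · -- b side
    intro htb
    set l := Filter.comap (fun s : ℝ => (s : EReal)) (nhdsWithin b (Set.Iio b)) with hl
    have hbasis : l.HasBasis (· < b) (fun c => (fun s : ℝ => (s : EReal)) ⁻¹' (Ioo c b)) :=
      (nhdsLT_basis_of_exists_lt ⟨a, hab⟩).comap _
    haveI : l.NeBot := by
      rw [hl, Filter.comap_neBot_iff]
      intro t ht
      obtain ⟨c₀, hc₀, hsub⟩ := (nhdsLT_basis_of_exists_lt ⟨a, hab⟩).mem_iff.1 ht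
      obtain ⟨z, hz1, hz2⟩ := EReal.exists_between_coe_real hc₀
      exact ⟨z, hsub ⟨hz1, hz2⟩⟩
    have hx0 : Tendsto (fun s => (γ s).1) l (nhds 0) := by
      have h3 := (continuous_fst.tendsto ((0:ℝ), y₀)).comp htb
      simpa [Function.comp_def] using h3
    have hy0 : Tendsto (fun s => (γ s).2) l (nhds y₀) := by
      have h3 := (continuous_snd.tendsto ((0:ℝ), y₀)).comp htb
      simpa [Function.comp_def] using h3
    have e1 : ∀ᶠ s : ℝ in l, a < (s:EReal) ∧ (s:EReal) < b := by
      have h4 : (fun s : ℝ => (s : EReal)) ⁻¹' (Ioo a b) ∈ l :=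
        Filter.preimage_mem_comap (Ioo_mem_nhdsLT_of_mem ⟨hab, le_refl b⟩)
      exact h4
    have e2 : ∀ᶠ s : ℝ in l, |(γ s).2| < r :=
      hy0.eventually ((isOpen_lt continuous_abs continuous_const).eventually_mem hry)
    have e3 : ∀ᶠ s : ℝ in l, Real.tanh (γ s).1 < (1 - r^2)/(2*C+1) := by
      have h5 : Tendsto (fun s => Real.tanh ((γ s).1)) l (nhds 0) := by
        have := (htanhcont.tendsto 0).comp hx0
        simpa [Function.comp_def] using this
      exact h5.eventually_lt_const hrpos
    have hP := e1.and (e2.and e3)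
    rw [hbasis.eventually_iff] at hP
    obtain ⟨c₀, hc₀b, hPJ⟩ := hP
    set J : Set ℝ := {s : ℝ | c₀ < (s:EReal) ∧ (s:EReal) < b} with hJdef
    have hJo : IsOpen J := isOpen_Ioo.preimage continuous_coe_real_ereal
    have hJc : Convex ℝ J := by
      rw [convex_iff_ordConnected]
      constructor
      intro p hp q hq z hz
      exact ⟨lt_of_lt_of_le hp.1 (EReal.coe_le_coe_iff.mpr hz.1),
        lt_of_le_of_lt (EReal.coe_le_coe_iff.mpr hz.2) hq.2⟩
    have hmemJ : ∀ᶠ s in l, s ∈ J := hbasis.eventually_iff.mpr ⟨c₀, hc₀b, fun s hs => hs⟩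
    have hfut : ∀ s ∈ J, ∀ᶠ t in l, s < t := by
      intro s hs
      have h6 : (fun t : ℝ => (t : EReal)) ⁻¹' (Ioo (s:EReal) b) ∈ l :=
        Filter.preimage_mem_comap (Ioo_mem_nhdsLT_of_mem ⟨hs.2, le_refl b⟩)
      have h7 : ∀ᶠ t : ℝ in l, (s:EReal) < (t:EReal) ∧ (t:EReal) < b := h6
      exact h7.mono fun t ht => EReal.coe_lt_coe_iff.mp ht.1
    have hOD : ∀ s ∈ J, γ s ∈ PhasePlane ∧ HasDerivAt γ (F h ε (γ s)) s := fun s hs =>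
      horb.2.2 s ⟨(hPJ hs).1.1, (hPJ hs).1.2⟩
    exact stmt3_core h ε C r y₀ hε hC0 hbd hr1 hry l J hJc hJo hmemJ hfut
      (fun s => (γ s).1) (fun s => (γ s).2)
      (fun s hs => (Set.mem_prod.mp (hOD s hs).1).1)
      (fun s hs => (hPJ hs).2.1)
      (fun s hs => (hPJ hs).2.2)
      (fun s hs => by
        have := (ContinuousLinearMap.fst ℝ ℝ ℝ).hasFDerivAt.comp_hasDerivAt s (hOD s hs).2
        exact this)
      (fun s hs => by
        have := (ContinuousLinearMap.snd ℝ ℝ ℝ).hasFDerivAt.comp_hasDerivAt s (hOD s hs).2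
        exact this)
      hx0 hy0
  · -- a side
    intro hta
    set l0 := Filter.comap (fun s : ℝ => (s : EReal)) (nhdsWithin a (Set.Ioi a)) with hl0
    have hbasis0 : l0.HasBasis (a < ·) (fun c => (fun s : ℝ => (s : EReal)) ⁻¹' (Ioo a c)) :=
      (nhdsGT_basis_of_exists_gt ⟨b, hab⟩).comap _
    haveI : l0.NeBot := by
      rw [hl0, Filter.comap_neBot_iff]
      intro t ht
      obtain ⟨c₀, hc₀, hsub⟩ := (nhdsGT_basis_of_exists_gt ⟨b, hab⟩).mem_iff.1 ht
      obtain ⟨z, hz1, hz2⟩ := EReal.exists_between_coe_real hc₀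
      exact ⟨z, hsub ⟨hz1, hz2⟩⟩
    set l := Filter.map (fun s : ℝ => -s) l0 with hlm
    haveI : l.NeBot := Filter.map_neBot
    have hγm : Tendsto (fun s => γ (-s)) l (nhds ((0:ℝ), y₀)) := by
      rw [hlm, Filter.tendsto_map'_iff]
      exact hta.congr fun u => by simp [Function.comp]
    have hx0 : Tendsto (fun s => (γ (-s)).1) l (nhds 0) := by
      have h3 := (continuous_fst.tendsto ((0:ℝ), y₀)).comp hγm
      simpa [Function.comp_def] using h3
    have hy0raw : Tendsto (fun s => (γ (-s)).2) l (nhds y₀) := by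
      have h3 := (continuous_snd.tendsto ((0:ℝ), y₀)).comp hγm
      simpa [Function.comp_def] using h3
    have hy0 : Tendsto (fun s => -(γ (-s)).2) l (nhds (-y₀)) := hy0raw.neg
    have e1 : ∀ᶠ u : ℝ in l0, a < (u:EReal) ∧ (u:EReal) < b := by
      have h4 : (fun s : ℝ => (s : EReal)) ⁻¹' (Ioo a b) ∈ l0 :=
        Filter.preimage_mem_comap (Ioo_mem_nhdsGT_of_mem ⟨le_refl a, hab⟩)
      exact h4
    have hy0' : Tendsto (fun u => (γ u).2) l0 (nhds y₀) := by
      have h3 := (continuous_snd.tendsto ((0:ℝ), y₀)).comp hta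
      simpa [Function.comp_def] using h3
    have hx0' : Tendsto (fun u => (γ u).1) l0 (nhds 0) := by
      have h3 := (continuous_fst.tendsto ((0:ℝ), y₀)).comp hta
      simpa [Function.comp_def] using h3
    have e2 : ∀ᶠ u : ℝ in l0, |(γ u).2| < r :=
      hy0'.eventually ((isOpen_lt continuous_abs continuous_const).eventually_mem hry)
    have e3 : ∀ᶠ u : ℝ in l0, Real.tanh (γ u).1 < (1 - r^2)/(2*C+1) := by
      have h5 : Tendsto (fun u => Real.tanh ((γ u).1)) l0 (nhds 0) := by
        have := (htanhcont.tendsto 0).comp hx0'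
        simpa [Function.comp_def] using this
      exact h5.eventually_lt_const hrpos
    have hP := e1.and (e2.and e3)
    rw [hbasis0.eventually_iff] at hP
    obtain ⟨c₀, hac₀, hPJ⟩ := hP
    set J : Set ℝ := {s : ℝ | a < ((-s : ℝ):EReal) ∧ ((-s : ℝ):EReal) < c₀} with hJdef
    have hJo : IsOpen J :=
      ((isOpen_Ioo.preimage continuous_coe_real_ereal).preimage continuous_neg :
        IsOpen ((fun s : ℝ => -s) ⁻¹' ((fun s : ℝ => (s : EReal)) ⁻¹' (Ioo a c₀))))
    have hJc : Convex ℝ J := by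
      rw [convex_iff_ordConnected]
      constructor
      intro p hp q hq z hz
      refine ⟨lt_of_lt_of_le hq.1 (EReal.coe_le_coe_iff.mpr (by linarith [hz.2])),
        lt_of_le_of_lt (EReal.coe_le_coe_iff.mpr (by linarith [hz.1])) hp.2⟩
    have hmemJ : ∀ᶠ s in l, s ∈ J := by
      rw [hlm, Filter.eventually_map]
      have h4 : ∀ᶠ u : ℝ in l0, a < (u:EReal) ∧ (u:EReal) < c₀ :=
        Filter.preimage_mem_comap (Ioo_mem_nhdsGT_of_mem ⟨le_refl a, hac₀⟩)
      exact h4.mono fun u hu => by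
        simp only [hJdef, mem_setOf_eq, neg_neg]
        exact hu
    have hfut : ∀ s ∈ J, ∀ᶠ t in l, s < t := by
      intro s hs
      rw [hlm, Filter.eventually_map]
      have h6 : ∀ᶠ u : ℝ in l0, a < (u:EReal) ∧ (u:EReal) < ((-s:ℝ):EReal) :=
        Filter.preimage_mem_comap (Ioo_mem_nhdsGT_of_mem ⟨le_refl a, hs.1⟩)
      exact h6.mono fun u hu => by
        have := EReal.coe_lt_coe_iff.mp hu.2
        linarith
    have hOD : ∀ s ∈ J, γ (-s) ∈ PhasePlane ∧ HasDerivAt γ (F h ε (γ (-s))) (-s) := by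
      intro s hs
      have h8 := hPJ hs
      exact horb.2.2 (-s) ⟨h8.1.1, h8.1.2⟩
    have hcomp : ∀ s ∈ J, HasDerivAt (fun t => γ (-t)) ((-1:ℝ) • (F h ε (γ (-s)))) s := by
      intro s hs
      exact HasDerivAt.scomp s (hOD s hs).2 (hasDerivAt_neg s)
    exact stmt3_core (fun u => h (-u)) ε C r (-y₀) hε hC0
      (fun u hu => hbd (-u) (by rwa [abs_neg]))
      hr1 (by rwa [abs_neg]) l J hJc hJo hmemJ hfut
      (fun s => (γ (-s)).1) (fun s => -(γ (-s)).2)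
      (fun s hs => (Set.mem_prod.mp (hOD s hs).1).1)
      (fun s hs => by rw [abs_neg]; exact (hPJ hs).2.1)
      (fun s hs => (hPJ hs).2.2)
      (fun s hs => by
        have h9 := (ContinuousLinearMap.fst ℝ ℝ ℝ).hasFDerivAt.comp_hasDerivAt s (hcomp s hs)
        exact h9.congr_deriv (by simp [F]))
      (fun s hs => by
        have h9 := (ContinuousLinearMap.snd ℝ ℝ ℝ).hasFDerivAt.comp_hasDerivAt s (hcomp s hs)
        have h10 := h9.neg
        exact h10.congr_deriv (by simp [F]))
      hx0 hy0
end

section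
/- Let h : [-1,1] → ℝ be C¹ with h(y) ≤ 0 for all y ∈ [-1,1] and h(-1) = h(1) = 0. Fix x₀ > 0 and let γ = (x,y) be the maximal orbit of F₁ in Θ with γ(0) = (x₀, 0). Then γ is defined on all of ℝ, y(s) is strictly increasing on ℝ, x attains its strict global minimum x₀ at s = 0, and x(s) → ∞, y(s) → ±1 as s → ±∞. -/
open Filter Set

namespace Stmt6Aux

lemma tanh_pos {x : ℝ} (hx : 0 < x) : 0 < Real.tanh x := by
  rw [Real.tanh_eq_sinh_div_cosh]
  exact div_pos (Real.sinh_pos_iff.2 hx) (Real.cosh_pos x)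

lemma tanh_lt_one (x : ℝ) : Real.tanh x < 1 := by
  rw [Real.tanh_eq_sinh_div_cosh]
  exact (div_lt_one (Real.cosh_pos x)).2 (Real.sinh_lt_cosh x)

lemma hasDerivAt_tanh (x : ℝ) :
    HasDerivAt Real.tanh (1 / Real.cosh x ^ 2) x := by
  have h : Real.tanh = fun x => Real.sinh x / Real.cosh x := by
    funext t; exact Real.tanh_eq_sinh_div_cosh t
  rw [h]
  have := (Real.hasDerivAt_sinh x).div (Real.hasDerivAt_cosh x) (Real.cosh_pos x).ne'
  refine this.congr_deriv ?_
  have h2 := Real.cosh_sq_sub_sinh_sq x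
  field_simp
  ring_nf
  nlinarith [Real.cosh_pos x]

lemma tanh_monotone : Monotone Real.tanh := by
  have : ∀ x : ℝ, 0 ≤ deriv Real.tanh x := by
    intro x
    rw [(hasDerivAt_tanh x).deriv]
    positivity
  exact monotone_of_deriv_nonneg
    (fun x => (hasDerivAt_tanh x).differentiableAt) this

lemma contDiff_tanh : ContDiff ℝ 1 Real.tanh := by
  have h : Real.tanh = fun x => Real.sinh x / Real.cosh x := by
    funext t; exact Real.tanh_eq_sinh_div_cosh t
  rw [h]
  exact Real.contDiff_sinh.div Real.contDiff_cosh fun x => (Real.cosh_pos x).ne'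

lemma isOpen_phasePlane : IsOpen PhasePlane := isOpen_Ioi.prod isOpen_Ioo

lemma isOpen_EIoo (a b : EReal) : IsOpen (EIoo a b) := by
  have : EIoo a b = Real.toEReal ⁻¹' (Set.Ioo a b) := rfl
  rw [this]
  exact (isOpen_Ioo).preimage continuous_coe_real_ereal

lemma ordConnected_EIoo (a b : EReal) : (EIoo a b).OrdConnected := by
  constructor
  intro s hs t ht u hu
  exact ⟨lt_of_lt_of_le hs.1 (EReal.coe_le_coe_iff.2 hu.1),
    lt_of_le_of_lt (EReal.coe_le_coe_iff.2 hu.2) ht.2⟩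

lemma hasDerivAt_fst {γ : ℝ → ℝ × ℝ} {v : ℝ × ℝ} {s : ℝ} (hγ : HasDerivAt γ v s) :
    HasDerivAt (fun t => (γ t).1) v.1 s :=
  ((ContinuousLinearMap.fst ℝ ℝ ℝ).hasFDerivAt.comp_hasDerivAt s hγ :)

lemma hasDerivAt_snd {γ : ℝ → ℝ × ℝ} {v : ℝ × ℝ} {s : ℝ} (hγ : HasDerivAt γ v s) :
    HasDerivAt (fun t => (γ t).2) v.2 s :=
  ((ContinuousLinearMap.snd ℝ ℝ ℝ).hasFDerivAt.comp_hasDerivAt s hγ :)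

lemma F_snd_pos {h : ℝ → ℝ} (hle : ∀ z ∈ Set.Icc (-1 : ℝ) 1, h z ≤ 0)
    {p : ℝ × ℝ} (hp : p ∈ PhasePlane) : 0 < (F h 1 p).2 := by
  obtain ⟨hp1, hp2⟩ := hp
  simp only [mem_Ioi] at hp1
  simp only [mem_Ioo] at hp2
  have h1 : 0 < 1 - p.2 ^ 2 := by nlinarith [hp2.1, hp2.2]
  have h2 : 0 < (1 - p.2 ^ 2) / Real.tanh p.1 := div_pos h1 (tanh_pos hp1)
  have h3 : 2 * (1:ℝ) * h p.2 * Real.sqrt (1 - p.2 ^ 2) ≤ 0 := by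
    have := hle p.2 ⟨hp2.1.le, hp2.2.le⟩
    have := Real.sqrt_nonneg (1 - p.2 ^ 2)
    nlinarith
  show 0 < (1 - p.2 ^ 2) / Real.tanh p.1 - 2 * 1 * h p.2 * Real.sqrt (1 - p.2 ^ 2)
  linarith

/-- The `ContDiffAt` property of the vector field at interior points of the phase plane. -/
lemma contDiffAt_F {h : ℝ → ℝ} (hC : ContDiffOn ℝ 1 h (Set.Icc (-1 : ℝ) 1))
    {p : ℝ × ℝ} (hp : p ∈ PhasePlane) : ContDiffAt ℝ 1 (F h 1) p := by
  obtain ⟨hp1, hp2⟩ := hp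
  simp only [mem_Ioi] at hp1
  simp only [mem_Ioo] at hp2
  have hA : ContDiffAt ℝ 1 (fun q : ℝ × ℝ => 1 - q.2 ^ 2) p :=
    (contDiff_const.sub (contDiff_snd.pow 2)).contDiffAt
  have hT : ContDiffAt ℝ 1 (fun q : ℝ × ℝ => Real.tanh q.1) p :=
    (contDiff_tanh.comp contDiff_fst).contDiffAt
  have hTne : Real.tanh p.1 ≠ 0 := (tanh_pos hp1).ne'
  have hdiv : ContDiffAt ℝ 1 (fun q : ℝ × ℝ => (1 - q.2 ^ 2) / Real.tanh q.1) p :=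
    hA.div hT hTne
  have hh : ContDiffAt ℝ 1 h p.2 :=
    hC.contDiffAt (Icc_mem_nhds (by linarith [hp2.1]) (by linarith [hp2.2]))
  have hH : ContDiffAt ℝ 1 (fun q : ℝ × ℝ => h q.2) p :=
    hh.comp p contDiff_snd.contDiffAt
  have hSne : 1 - p.2 ^ 2 ≠ 0 := by nlinarith [hp2.1, hp2.2]
  have hS : ContDiffAt ℝ 1 (fun q : ℝ × ℝ => Real.sqrt (1 - q.2 ^ 2)) p :=
    (Real.contDiffAt_sqrt hSne).comp p hA
  have h2 : ContDiffAt ℝ 1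
      (fun q : ℝ × ℝ => (1 - q.2 ^ 2) / Real.tanh q.1
        - 2 * 1 * h q.2 * Real.sqrt (1 - q.2 ^ 2)) p :=
    hdiv.sub (((contDiffAt_const.mul hH)).mul hS)
  exact ContDiffAt.prodMk (contDiff_snd.contDiffAt) h2




/-- The maximal orbit cannot have a finite forward endpoint. -/
lemma key {h : ℝ → ℝ} (hC : ContDiffOn ℝ 1 h (Set.Icc (-1 : ℝ) 1))
    (hle : ∀ z ∈ Set.Icc (-1 : ℝ) 1, h z ≤ 0) (hp1 : h 1 = 0)
    {x₀ : ℝ} (hx₀ : 0 < x₀) {a b : EReal} {γ : ℝ → ℝ × ℝ}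
    (horb : IsMaxOrbitOn h 1 γ (EIoo a b)) (hmem : (0 : ℝ) ∈ EIoo a b)
    (hinit : γ 0 = (x₀, 0)) : b = ⊤ := by
  by_contra hbtop
  obtain ⟨⟨hIop, hIoc, hsol⟩, hmax⟩ := horb
  set I := EIoo a b with hIdef
  have ha0 : a < ((0:ℝ) : EReal) := hmem.1
  have hb0 : ((0:ℝ) : EReal) < b := hmem.2
  -- b is a finite real number B
  obtain ⟨B, rfl⟩ : ∃ B : ℝ, b = (B : EReal) := by
    cases b with
    | bot => exact absurd hb0 (by simp)
    | coe B => exact ⟨B, rfl⟩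
    | top => exact absurd rfl hbtop
  have hB : (0:ℝ) < B := EReal.coe_lt_coe_iff.1 hb0
  -- basic notation
  set X : ℝ → ℝ := fun s => (γ s).1 with hXdef
  set Y : ℝ → ℝ := fun s => (γ s).2 with hYdef
  have h0I : (0:ℝ) ∈ I := hmem
  have hIcoI : Set.Ico (0:ℝ) B ⊆ I := fun s hs =>
    ⟨lt_of_lt_of_le ha0 (EReal.coe_le_coe_iff.2 hs.1), EReal.coe_lt_coe_iff.2 hs.2⟩
  have hIooI : Set.Ioo (0:ℝ) B ⊆ I := fun s hs => hIcoI (Ioo_subset_Ico_self hs)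
  have hXd : ∀ s ∈ I, HasDerivAt X (Y s) s := fun s hs => hasDerivAt_fst (hsol s hs).2
  have hYd : ∀ s ∈ I, HasDerivAt Y ((F h 1 (γ s)).2) s := fun s hs =>
    hasDerivAt_snd (hsol s hs).2
  have hXpos : ∀ s ∈ I, 0 < X s := fun s hs => (hsol s hs).1.1
  have hYmem : ∀ s ∈ I, -1 < Y s ∧ Y s < 1 := fun s hs =>
    ⟨((hsol s hs).1.2).1, ((hsol s hs).1.2).2⟩
  have hGpos : ∀ s ∈ I, 0 < (F h 1 (γ s)).2 := fun s hs => F_snd_pos hle (hsol s hs).1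
  have hY0 : Y 0 = 0 := by rw [hYdef]; simp [hinit]
  have hX0 : X 0 = x₀ := by rw [hXdef]; simp [hinit]
  have hIconv : Convex ℝ I := convex_iff_ordConnected.2 hIoc
  -- Y is strictly monotone on I
  have hYmono : StrictMonoOn Y I := by
    apply strictMonoOn_of_deriv_pos hIconv
    · exact fun s hs => ((hYd s hs).continuousAt.continuousWithinAt)
    · intro s hs
      rw [hIop.interior_eq] at hs
      rw [(hYd s hs).deriv]
      exact hGpos s hs
  have hYnn : ∀ s ∈ Set.Ico (0:ℝ) B, 0 ≤ Y s := by
    intro s hs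
    rcases eq_or_lt_of_le hs.1 with rfl | hlt
    · exact le_of_eq hY0.symm
    · exact le_of_lt (hY0 ▸ hYmono h0I (hIcoI hs) hlt)
  have hYlt1 : ∀ s ∈ I, Y s < 1 := fun s hs => (hYmem s hs).2
  -- X is monotone on [0, B)
  have hXmono : MonotoneOn X (Set.Ico (0:ℝ) B) := by
    apply monotoneOn_of_deriv_nonneg (convex_Ico 0 B)
    · exact fun s hs => ((hXd s (hIcoI hs)).continuousAt.continuousWithinAt)
    · intro s hs
      rw [interior_Ico] at hs
      exact ((hXd s (hIooI hs)).differentiableAt.differentiableWithinAt)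
    · intro s hs
      rw [interior_Ico] at hs
      rw [(hXd s (hIooI hs)).deriv]
      exact hYnn s (Ioo_subset_Ico_self hs)
  have hXlb : ∀ s ∈ Set.Ico (0:ℝ) B, x₀ ≤ X s := by
    intro s hs
    have := hXmono ⟨le_rfl, hB⟩ hs hs.1
    rwa [hX0] at this
  -- upper bound for X
  have hWd : ∀ s ∈ I, HasDerivAt (fun t => x₀ + t - X t) (1 - Y s) s := by
    intro s hs
    have := ((hasDerivAt_id s).const_add x₀).sub (hXd s hs)
    exact this.congr_deriv (by ring)
  have hXub : ∀ s ∈ Set.Ico (0:ℝ) B, X s ≤ x₀ + s := by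
    have hW : MonotoneOn (fun t => x₀ + t - X t) (Set.Ico (0:ℝ) B) := by
      apply monotoneOn_of_deriv_nonneg (convex_Ico 0 B)
      · exact fun s hs => ((hWd s (hIcoI hs)).continuousAt.continuousWithinAt)
      · intro s hs
        rw [interior_Ico] at hs
        exact (hWd s (hIooI hs)).differentiableAt.differentiableWithinAt
      · intro s hs
        rw [interior_Ico] at hs
        rw [(hWd s (hIooI hs)).deriv]
        have := hYlt1 s (hIooI hs)
        linarith
    intro s hs
    have h1 := hW ⟨le_rfl, hB⟩ hs hs.1
    simp only [hX0] at h1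
    linarith [h1]
  -- Lipschitz constant for h on [-1,1]
  obtain ⟨M, hM⟩ : ∃ M : ℝ, ∀ z ∈ Set.Icc (-1:ℝ) 1, ‖derivWithin h (Set.Icc (-1:ℝ) 1) z‖ ≤ M := by
    obtain ⟨M, hM⟩ := isCompact_Icc.exists_bound_of_continuousOn
      (hC.continuousOn_derivWithin (uniqueDiffOn_Icc (by norm_num)) le_rfl)
    exact ⟨M, hM⟩
  set K : NNReal := ⟨max M 0, le_max_right M 0⟩ with hKdef
  have hlip : LipschitzOnWith K h (Set.Icc (-1:ℝ) 1) := by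
    apply (convex_Icc (-1:ℝ) 1).lipschitzOnWith_of_nnnorm_derivWithin_le
      (hC.differentiableOn one_ne_zero)
    intro z hz
    rw [← NNReal.coe_le_coe]
    exact le_trans (hM z hz) (le_max_left M 0)
  have habs : ∀ z ∈ Set.Icc (-1:ℝ) 1, |h z| ≤ (K:ℝ) * (1 - z) := by
    intro z hz
    have h1 : dist (h z) (h 1) ≤ (K:ℝ) * dist z 1 :=
      hlip.dist_le_mul z hz 1 ⟨by norm_num, le_rfl⟩
    rw [hp1, dist_zero_right, Real.dist_eq] at h1
    rw [abs_of_nonpos (by linarith [hz.2] : z - 1 ≤ 0)] at h1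
    calc |h z| = ‖h z‖ := rfl
    _ ≤ (K:ℝ) * -(z-1) := h1
    _ = (K:ℝ) * (1 - z) := by ring
  set C : ℝ := 2 / Real.tanh x₀ + 2 * K with hCdef
  have hC0 : 0 < C := by
    have h1 := tanh_pos hx₀
    have h2 : 0 < 2 / Real.tanh x₀ := div_pos two_pos h1
    have hK0 : (0:ℝ) ≤ K := K.2
    rw [hCdef]; linarith
  -- the key differential inequality
  have hGle : ∀ s ∈ Set.Ico (0:ℝ) B, (F h 1 (γ s)).2 ≤ C * (1 - Y s) := by
    intro s hs
    have hsI := hIcoI hs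
    have hy0 : 0 ≤ Y s := hYnn s hs
    have hy1 : Y s < 1 := hYlt1 s hsI
    have htx : Real.tanh x₀ ≤ Real.tanh (X s) := tanh_monotone (hXlb s hs)
    have htp : 0 < Real.tanh x₀ := tanh_pos hx₀
    have h1 : (1 - Y s ^ 2) / Real.tanh (X s) ≤ 2 * (1 - Y s) / Real.tanh x₀ := by
      apply div_le_div₀ (by nlinarith) (by nlinarith) htp htx
    have hsq : Real.sqrt (1 - Y s ^ 2) ≤ 1 := by
      exact Real.sqrt_le_one.2 (by nlinarith)
    have hsq0 : 0 ≤ Real.sqrt (1 - Y s ^ 2) := Real.sqrt_nonneg _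
    have h2 : -(2 * 1 * h (Y s) * Real.sqrt (1 - Y s ^ 2)) ≤ 2 * (K:ℝ) * (1 - Y s) := by
      have hmem2 : Y s ∈ Set.Icc (-1:ℝ) 1 := ⟨by linarith [(hYmem s hsI).1], hy1.le⟩
      have habs2 : -h (Y s) ≤ (K:ℝ) * (1 - Y s) := by
        linarith [abs_le.1 (habs (Y s) hmem2), neg_abs_le (h (Y s))]
      have hh0 : h (Y s) ≤ 0 := hle _ hmem2
      have e2 : 2 * (-h (Y s)) * Real.sqrt (1 - Y s ^ 2) ≤ 2 * (-h (Y s)) * 1 :=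
        mul_le_mul_of_nonneg_left hsq (by linarith)
      nlinarith [e2, habs2]
    show (1 - Y s ^ 2) / Real.tanh (X s) - 2 * 1 * h (Y s) * Real.sqrt (1 - Y s ^ 2) ≤ C * (1 - Y s)
    have h3 : 2 * (1 - Y s) / Real.tanh x₀ = 2 / Real.tanh x₀ * (1 - Y s) := by ring
    rw [hCdef]
    calc (1 - Y s ^ 2) / Real.tanh (X s) - 2 * 1 * h (Y s) * Real.sqrt (1 - Y s ^ 2)
        ≤ 2 * (1 - Y s) / Real.tanh x₀ + 2 * (K:ℝ) * (1 - Y s) := by linarith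
    _ = (2 / Real.tanh x₀ + 2 * (K:ℝ)) * (1 - Y s) := by ring
  -- Gronwall-type bound: Y s ≤ 1 - exp (-C * B) on [0, B)
  set Ybnd : ℝ := 1 - Real.exp (-C * B) with hYbnddef
  have hYbnd1 : Ybnd < 1 := by
    have := Real.exp_pos (-C * B); rw [hYbnddef]; linarith
  have hYub : ∀ s ∈ Set.Ico (0:ℝ) B, Y s ≤ Ybnd := by
    have hUD : ∀ s ∈ I, HasDerivAt (fun t => (1 - Y t) * Real.exp (C * t))
        (-(F h 1 (γ s)).2 * Real.exp (C * s) + (1 - Y s) * (C * Real.exp (C * s))) s := by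
      intro s hs
      have h1 : HasDerivAt (fun t => 1 - Y t) (-(F h 1 (γ s)).2) s :=
        (hYd s hs).const_sub 1
      have h2 : HasDerivAt (fun t : ℝ => Real.exp (C * t)) (Real.exp (C * s) * C) s := by
        have := ((hasDerivAt_id s).const_mul C).exp
        simpa using this
      have := h1.mul h2
      refine this.congr_deriv ?_
      ring
    have hU : MonotoneOn (fun t => (1 - Y t) * Real.exp (C * t)) (Set.Ico (0:ℝ) B) := by
      apply monotoneOn_of_deriv_nonneg (convex_Ico 0 B)
      · exact fun s hs => ((hUD s (hIcoI hs)).continuousAt.continuousWithinAt)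
      · intro s hs
        rw [interior_Ico] at hs
        exact (hUD s (hIooI hs)).differentiableAt.differentiableWithinAt
      · intro s hs
        rw [interior_Ico] at hs
        rw [(hUD s (hIooI hs)).deriv]
        have h1 := hGle s (Ioo_subset_Ico_self hs)
        have h2 := Real.exp_pos (C * s)
        nlinarith
    intro s hs
    have h0 := hU ⟨le_rfl, hB⟩ hs hs.1
    have h1 : (1:ℝ) ≤ (1 - Y s) * Real.exp (C * s) := by simpa [hY0] using h0
    have hes : Real.exp (C * s) ≤ Real.exp (C * B) :=
      Real.exp_le_exp.2 (by nlinarith [hs.1, hs.2, hC0])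
    have hep : 0 < Real.exp (C * s) := Real.exp_pos _
    have h2 : Real.exp (-C * s) ≤ 1 - Y s := by
      rw [neg_mul, Real.exp_neg]
      rw [inv_le_iff_one_le_mul₀ hep]
      linarith [mul_comm (1 - Y s) (Real.exp (C * s))]
    have h3 : Real.exp (-C * B) ≤ Real.exp (-C * s) :=
      Real.exp_le_exp.2 (by nlinarith [hs.1, hs.2, hC0])
    rw [hYbnddef]
    linarith
  -- limits of X and Y as s → B⁻
  have hne : (Set.Ioo (0:ℝ) B).Nonempty := ⟨B/2, by constructor <;> linarith⟩
  have hBmem : B/2 ∈ Set.Ioo (0:ℝ) B := by constructor <;> linarith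
  set Ly : ℝ := sSup (Y '' Set.Ioo 0 B) with hLydef
  set Lx : ℝ := sSup (X '' Set.Ioo 0 B) with hLxdef
  have hYbddAbove : BddAbove (Y '' Set.Ioo 0 B) := by
    refine ⟨Ybnd, ?_⟩
    rintro _ ⟨t, ht, rfl⟩
    exact hYub t (Ioo_subset_Ico_self ht)
  have hXbddAbove : BddAbove (X '' Set.Ioo 0 B) := by
    refine ⟨x₀ + B, ?_⟩
    rintro _ ⟨t, ht, rfl⟩
    have := hXub t (Ioo_subset_Ico_self ht)
    linarith [ht.2]
  have hYtend : Tendsto Y (nhdsWithin B (Set.Iio B)) (nhds Ly) :=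
    MonotoneOn.tendsto_nhdsWithin_Ioo_left hne
      ((hYmono.monotoneOn).mono hIooI) hYbddAbove
  have hXtend : Tendsto X (nhdsWithin B (Set.Iio B)) (nhds Lx) :=
    MonotoneOn.tendsto_nhdsWithin_Ioo_left hne
      (hXmono.mono Ioo_subset_Ico_self) hXbddAbove
  have hLy_le : Ly ≤ Ybnd := csSup_le (hne.image Y)
    (by rintro _ ⟨t, ht, rfl⟩; exact hYub t (Ioo_subset_Ico_self ht))
  have hLy_ge : 0 ≤ Ly := by
    have := le_csSup hYbddAbove (mem_image_of_mem Y hBmem)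
    have h2 := hYnn (B/2) (Ioo_subset_Ico_self hBmem)
    linarith
  have hLx_ge : x₀ ≤ Lx := by
    have := le_csSup hXbddAbove (mem_image_of_mem X hBmem)
    have h2 := hXlb (B/2) (Ioo_subset_Ico_self hBmem)
    linarith
  have hpPP : (Lx, Ly) ∈ PhasePlane := by
    constructor
    · simp only [mem_Ioi]; linarith
    · simp only [mem_Ioo]; constructor <;> [linarith; linarith]
  have hγtend : Tendsto γ (nhdsWithin B (Set.Iio B)) (nhds (Lx, Ly)) := by
    have := hXtend.prodMk_nhds hYtend
    exact this
  -- local solution through (Lx, Ly) at time B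
  have hcd : ContDiffAt ℝ 1 (F h 1) (Lx, Ly) := contDiffAt_F hC hpPP
  obtain ⟨f, hfB, ε, hε0, hf⟩ := hcd.exists_forall_mem_closedBall_exists_eq_forall_mem_Ioo_hasDerivAt₀ B
  have hBIoo : B ∈ Set.Ioo (B - ε) (B + ε) := by constructor <;> linarith
  have hfcont : ContinuousAt f B := (hf B hBIoo).continuousAt
  have hnbhd : ∀ᶠ t in nhds B, f t ∈ PhasePlane ∧ t ∈ Set.Ioo (B - ε) (B + ε) := by
    refine Filter.Eventually.and ?_ (Ioo_mem_nhds hBIoo.1 hBIoo.2)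
    have : PhasePlane ∈ nhds (f B) := isOpen_phasePlane.mem_nhds (by rw [hfB]; exact hpPP)
    exact hfcont.preimage_mem_nhds this
  obtain ⟨ε', hε'0, hball⟩ := Metric.eventually_nhds_iff_ball.1 hnbhd
  -- the endpoint derivative of γ extended to B
  set p : ℝ × ℝ := (Lx, Ly) with hpdef
  set Γ : ℝ → ℝ × ℝ := Function.update γ B p with hΓdef
  have hΓeq : ∀ t : ℝ, t ≠ B → Γ t = γ t := fun t ht => Function.update_of_ne ht _ _
  have hΓB : Γ B = p := Function.update_self _ _ _
  have hΓd : ∀ t ∈ Set.Ioo (0:ℝ) B, HasDerivAt Γ (F h 1 (γ t)) t := by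
    intro t ht
    apply (hsol t (hIooI ht)).2.congr_of_eventuallyEq
    filter_upwards [Iio_mem_nhds ht.2] with u hu
    exact hΓeq u (ne_of_lt hu)
  have hΓdB : HasDerivWithinAt Γ (F h 1 p) (Set.Iic B) B := by
    apply hasDerivWithinAt_Iic_of_tendsto_deriv
      (s := Set.Ioo (0:ℝ) B)
    · exact fun t ht => (hΓd t ht).differentiableAt.differentiableWithinAt
    · rw [ContinuousWithinAt, hΓB]
      have h1 : Tendsto γ (nhdsWithin B (Set.Ioo (0:ℝ) B)) (nhds p) :=
        hγtend.mono_left (nhdsWithin_mono _ Ioo_subset_Iio_self)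
      apply h1.congr'
      filter_upwards [self_mem_nhdsWithin] with u hu
      exact (hΓeq u (ne_of_lt hu.2)).symm
    · exact Ioo_mem_nhdsLT_of_mem ⟨hB, le_rfl⟩
    · have h1 : Tendsto (fun t => F h 1 (γ t)) (nhdsWithin B (Set.Iio B)) (nhds (F h 1 p)) :=
        (hcd.continuousAt.tendsto).comp hγtend
      apply h1.congr'
      filter_upwards [Ioo_mem_nhdsLT_of_mem (⟨hB, le_rfl⟩ : B ∈ Set.Ioc 0 B)] with u hu
      exact ((hΓd u hu).deriv).symm
  -- the glued extension
  set δ : ℝ → ℝ × ℝ := fun s => if s < B then γ s else f s with hδdef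
  have hδeqγ : ∀ t : ℝ, t < B → δ t = γ t := fun t ht => if_pos ht
  have hδeqf : ∀ t : ℝ, B ≤ t → δ t = f t := fun t ht => if_neg (not_lt.2 ht)
  have hδB : δ B = p := by rw [hδeqf B le_rfl, hfB]
  set J : Set ℝ := EIoo a ((B + ε'/2 : ℝ) : EReal) with hJdef
  have hJorb : IsOrbitOn h 1 δ J := by
    refine ⟨isOpen_EIoo _ _, ordConnected_EIoo _ _, ?_⟩
    intro s hs
    rcases lt_trichotomy s B with hlt | heq | hgt
    · have hsI : s ∈ I := ⟨hs.1, EReal.coe_lt_coe_iff.2 hlt⟩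
      constructor
      · rw [hδeqγ s hlt]; exact (hsol s hsI).1
      · have := (hsol s hsI).2
        rw [hδeqγ s hlt] at *
        apply this.congr_of_eventuallyEq
        filter_upwards [Iio_mem_nhds hlt] with u hu
        exact hδeqγ u hu
    · subst heq
      constructor
      · rw [hδB]; exact hpPP
      · rw [hδB]
        have hleft : HasDerivWithinAt δ (F h 1 p) (Set.Iic s) s := by
          apply hΓdB.congr
          · intro t ht
            rcases lt_or_eq_of_le (mem_Iic.1 ht) with hlt | rfl
            · rw [hδeqγ t hlt, hΓeq t (ne_of_lt hlt)]
            · rw [hδB, hΓB]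
          · rw [hδB, hΓB]
        have hright : HasDerivWithinAt δ (F h 1 p) (Set.Ici s) s := by
          have h1 : HasDerivAt f (F h 1 (f s)) s := hf s hBIoo
          rw [hfB] at h1
          apply h1.hasDerivWithinAt.congr
          · intro t ht
            exact hδeqf t (mem_Ici.1 ht)
          · exact hδeqf s le_rfl
        have h2 := hleft.union hright
        rw [Iic_union_Ici] at h2
        rw [← hasDerivWithinAt_univ]
        exact h2
    · have hs2 : s < B + ε'/2 := EReal.coe_lt_coe_iff.1 hs.2
      have hsball : s ∈ Metric.ball B ε' := by
        rw [Metric.mem_ball, Real.dist_eq, abs_of_pos (by linarith)]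
        linarith
      obtain ⟨hfP, hfIoo⟩ := hball s hsball
      constructor
      · rw [hδeqf s hgt.le]; exact hfP
      · rw [hδeqf s hgt.le]
        have h1 : HasDerivAt f (F h 1 (f s)) s := hf s hfIoo
        apply h1.congr_of_eventuallyEq
        filter_upwards [Ioi_mem_nhds hgt] with u hu
        exact hδeqf u (le_of_lt hu)
  have hIJ : I ⊆ J := by
    intro s hs
    refine ⟨hs.1, lt_trans hs.2 (EReal.coe_lt_coe_iff.2 (by linarith))⟩
  have heqOn : Set.EqOn δ γ I := fun s hs => hδeqγ s (EReal.coe_lt_coe_iff.1 hs.2)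
  have hJI := hmax δ J hJorb hIJ heqOn
  have hBJ : B ∈ J := by
    refine ⟨lt_trans ha0 (EReal.coe_lt_coe_iff.2 hB), EReal.coe_lt_coe_iff.2 (by linarith)⟩
  rw [hJI] at hBJ
  exact absurd (EReal.coe_lt_coe_iff.1 hBJ.2) (lt_irrefl B)



def reflh (h : ℝ → ℝ) : ℝ → ℝ := fun z => h (-z)
def reflOrbit (γ : ℝ → ℝ × ℝ) : ℝ → ℝ × ℝ := fun s => ((γ (-s)).1, -(γ (-s)).2)

lemma reflh_reflh (h : ℝ → ℝ) : reflh (reflh h) = h := by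
  funext z; simp [reflh]

lemma reflOrbit_reflOrbit (γ : ℝ → ℝ × ℝ) : reflOrbit (reflOrbit γ) = γ := by
  funext s; simp [reflOrbit]

lemma mem_neg_EIoo {a b : EReal} {s : ℝ} :
    s ∈ EIoo (-b) (-a) ↔ -s ∈ EIoo a b := by
  simp only [EIoo, mem_setOf_eq, EReal.coe_neg]
  constructor
  · rintro ⟨h1, h2⟩
    refine ⟨?_, EReal.neg_lt_comm.2 h1⟩
    have := EReal.neg_lt_neg_iff.2 h2
    rwa [neg_neg] at this
  · rintro ⟨h1, h2⟩
    refine ⟨EReal.neg_lt_comm.2 h2, ?_⟩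
    have := EReal.neg_lt_neg_iff.2 h1
    rwa [neg_neg] at this

lemma neg_preimage_EIoo (a b : EReal) : Neg.neg ⁻¹' (EIoo a b) = EIoo (-b) (-a) := by
  ext s; simp only [mem_preimage]; exact mem_neg_EIoo.symm

lemma isOrbitOn_refl {h : ℝ → ℝ} {ε : ℝ} {γ : ℝ → ℝ × ℝ} {J : Set ℝ}
    (hJ : IsOrbitOn h ε γ J) : IsOrbitOn (reflh h) ε (reflOrbit γ) (Neg.neg ⁻¹' J) := by
  obtain ⟨hop, hoc, hsol⟩ := hJ
  refine ⟨hop.preimage continuous_neg, ?_, ?_⟩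
  · constructor
    intro s hs t ht u hu
    exact hoc.out ht hs ⟨neg_le_neg hu.2, neg_le_neg hu.1⟩
  · intro s hs
    obtain ⟨hmem, hder⟩ := hsol (-s) hs
    constructor
    · simp only [PhasePlane, reflOrbit, mem_prod, mem_Ioi, mem_Ioo] at hmem ⊢
      exact ⟨hmem.1, by linarith [hmem.2.2], by linarith [hmem.2.1]⟩
    · have h1 : HasDerivAt (fun t : ℝ => γ (-t)) ((-1 : ℝ) • F h ε (γ (-s))) s :=
        hder.scomp s (hasDerivAt_neg s)
      have h2 := hasDerivAt_fst h1
      have h3 := (hasDerivAt_snd h1).neg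
      have h4 := HasDerivAt.prodMk h2 h3
      convert h4 using 1
      show F (reflh h) ε (reflOrbit γ s) = _
      simp only [F, reflOrbit, reflh, neg_neg, neg_smul, one_smul, Prod.fst_neg,
        Prod.snd_neg, neg_sq, Prod.mk.injEq]
      rfl

lemma isMaxOrbitOn_refl {h : ℝ → ℝ} {γ : ℝ → ℝ × ℝ} {a b : EReal}
    (hm : IsMaxOrbitOn h 1 γ (EIoo a b)) :
    IsMaxOrbitOn (reflh h) 1 (reflOrbit γ) (EIoo (-b) (-a)) := by
  obtain ⟨horb, hmax⟩ := hm
  constructor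
  · rw [← neg_preimage_EIoo]; exact isOrbitOn_refl horb
  · intro δ J hJ hsub heq
    have hJ' : IsOrbitOn h 1 (reflOrbit δ) (Neg.neg ⁻¹' J) := by
      have := isOrbitOn_refl hJ
      rwa [reflh_reflh] at this
    have hsub' : EIoo a b ⊆ Neg.neg ⁻¹' J := by
      intro s hs
      have : -s ∈ EIoo (-b) (-a) := mem_neg_EIoo.2 (by rwa [neg_neg])
      exact hsub this
    have heq' : Set.EqOn (reflOrbit δ) γ (EIoo a b) := by
      intro s hs
      have : -s ∈ EIoo (-b) (-a) := mem_neg_EIoo.2 (by rwa [neg_neg])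
      have := heq this
      simp only [reflOrbit, neg_neg] at this ⊢
      rw [this]
      simp [reflOrbit]
    have hJeq := hmax (reflOrbit δ) (Neg.neg ⁻¹' J) hJ' hsub' heq'
    have : Neg.neg ⁻¹' (Neg.neg ⁻¹' J) = J := by
      ext s; simp
    rw [← this, hJeq, neg_preimage_EIoo]


lemma F_snd_ge {h : ℝ → ℝ} (hle : ∀ z ∈ Set.Icc (-1 : ℝ) 1, h z ≤ 0)
    {p : ℝ × ℝ} (hp : p ∈ PhasePlane) : 1 - p.2 ^ 2 ≤ (F h 1 p).2 := by
  obtain ⟨hp1, hp2⟩ := hp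
  simp only [mem_Ioi] at hp1
  simp only [mem_Ioo] at hp2
  have h1 : 0 < 1 - p.2 ^ 2 := by nlinarith [hp2.1, hp2.2]
  have ht0 : 0 < Real.tanh p.1 := tanh_pos hp1
  have ht1 : Real.tanh p.1 < 1 := tanh_lt_one p.1
  have h2 : 1 - p.2 ^ 2 ≤ (1 - p.2 ^ 2) / Real.tanh p.1 := by
    rw [le_div_iff₀ ht0]
    nlinarith
  have h3 : 2 * (1:ℝ) * h p.2 * Real.sqrt (1 - p.2 ^ 2) ≤ 0 := by
    have := hle p.2 ⟨hp2.1.le, hp2.2.le⟩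
    have := Real.sqrt_nonneg (1 - p.2 ^ 2)
    nlinarith
  show 1 - p.2 ^ 2 ≤ (1 - p.2 ^ 2) / Real.tanh p.1 - 2 * 1 * h p.2 * Real.sqrt (1 - p.2 ^ 2)
  linarith

lemma asymp {h : ℝ → ℝ} (hle : ∀ z ∈ Set.Icc (-1 : ℝ) 1, h z ≤ 0)
    {x₀ : ℝ} (hx₀ : 0 < x₀) {γ : ℝ → ℝ × ℝ}
    (hsol : ∀ s : ℝ, γ s ∈ PhasePlane ∧ HasDerivAt γ (F h 1 (γ s)) s)
    (hinit : γ 0 = (x₀, 0)) :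
    (∀ s : ℝ, 0 < s → x₀ < (γ s).1) ∧
    Tendsto (fun s => (γ s).1) atTop atTop ∧
    Tendsto (fun s => (γ s).2) atTop (nhds 1) := by
  set X : ℝ → ℝ := fun s => (γ s).1 with hXdef
  set Y : ℝ → ℝ := fun s => (γ s).2 with hYdef
  have hXd : ∀ s : ℝ, HasDerivAt X (Y s) s := fun s => hasDerivAt_fst (hsol s).2
  have hYd : ∀ s : ℝ, HasDerivAt Y ((F h 1 (γ s)).2) s := fun s => hasDerivAt_snd (hsol s).2
  have hGpos : ∀ s : ℝ, 0 < (F h 1 (γ s)).2 := fun s => F_snd_pos hle (hsol s).1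
  have hY0 : Y 0 = 0 := by rw [hYdef]; simp [hinit]
  have hX0 : X 0 = x₀ := by rw [hXdef]; simp [hinit]
  have hylt1 : ∀ s, Y s < 1 := fun s => ((hsol s).1.2).2
  have hygt : ∀ s, -1 < Y s := fun s => ((hsol s).1.2).1
  have hYsm : StrictMono Y := by
    apply strictMono_of_deriv_pos
    intro s
    rw [(hYd s).deriv]
    exact hGpos s
  have hYpos : ∀ s : ℝ, 0 < s → 0 < Y s := fun s hs => hY0 ▸ hYsm hs
  have hXsm : StrictMonoOn X (Set.Ici 0) := by
    apply strictMonoOn_of_deriv_pos (convex_Ici 0)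
    · exact fun s _ => ((hXd s).continuousAt.continuousWithinAt)
    · intro s hs
      rw [interior_Ici] at hs
      rw [(hXd s).deriv]
      exact hYpos s hs
  have part1 : ∀ s : ℝ, 0 < s → x₀ < X s := by
    intro s hs
    have := hXsm (self_mem_Ici) (mem_Ici.2 hs.le) hs
    rwa [hX0] at this
  -- Y tends to 1
  have hbdd : BddAbove (Set.range Y) := ⟨1, by rintro _ ⟨s, rfl⟩; exact (hylt1 s).le⟩
  set L : ℝ := ⨆ s, Y s with hLdef
  have hYtend : Tendsto Y atTop (nhds L) := tendsto_atTop_ciSup hYsm.monotone hbdd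
  have hL_le1 : L ≤ 1 := ciSup_le fun s => (hylt1 s).le
  have hL_pos : 0 < L := lt_of_lt_of_le (hYpos 1 one_pos) (le_ciSup hbdd 1)
  have hLeq : L = 1 := by
    by_contra hne
    have hL1 : L < 1 := lt_of_le_of_ne hL_le1 hne
    set c : ℝ := 1 - L ^ 2 with hcdef
    have hc : 0 < c := by nlinarith
    have hZd : ∀ s : ℝ, HasDerivAt (fun t => Y t - c * t) ((F h 1 (γ s)).2 - c) s := by
      intro s
      have := (hYd s).sub ((hasDerivAt_id s).const_mul c)
      exact this.congr_deriv (by ring)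
    have hmono2 : MonotoneOn (fun t => Y t - c * t) (Set.Ici 0) := by
      apply monotoneOn_of_deriv_nonneg (convex_Ici 0)
      · exact fun s _ => ((hZd s).continuousAt.continuousWithinAt)
      · exact fun s _ => (hZd s).differentiableAt.differentiableWithinAt
      · intro s hs
        rw [interior_Ici] at hs
        rw [(hZd s).deriv]
        have h1 : 1 - Y s ^ 2 ≤ (F h 1 (γ s)).2 := F_snd_ge hle (hsol s).1
        have h2 : Y s ≤ L := le_ciSup hbdd s
        have h3 : 0 < Y s := hYpos s hs
        have : c ≤ 1 - Y s ^ 2 := by rw [hcdef]; nlinarith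
        linarith
    have h4 := hmono2 (self_mem_Ici) (mem_Ici.2 (by positivity : (0:ℝ) ≤ 2 / c)) (by positivity)
    simp only [hY0, mul_zero, sub_zero, zero_sub] at h4
    have h5 : c * (2 / c) = 2 := by field_simp
    have h6 := hylt1 (2 / c)
    have h7 : Y (2/c) - c * (2/c) ≥ 0 := by linarith [h4]
    rw [h5] at h7
    linarith
  rw [hLeq] at hYtend
  -- X tends to infinity
  set c' : ℝ := Y 1 with hc'def
  have hc' : 0 < c' := hYpos 1 one_pos
  have hZd : ∀ s : ℝ, HasDerivAt (fun t => X t - c' * t) (Y s - c') s := by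
    intro s
    have := (hXd s).sub ((hasDerivAt_id s).const_mul c')
    exact this.congr_deriv (by ring)
  have hmono3 : MonotoneOn (fun t => X t - c' * t) (Set.Ici 1) := by
    apply monotoneOn_of_deriv_nonneg (convex_Ici 1)
    · exact fun s _ => ((hZd s).continuousAt.continuousWithinAt)
    · exact fun s _ => (hZd s).differentiableAt.differentiableWithinAt
    · intro s hs
      rw [interior_Ici] at hs
      rw [(hZd s).deriv]
      have : c' ≤ Y s := (hYsm.monotone (le_of_lt hs))
      linarith
  have hXlow : ∀ s : ℝ, 1 ≤ s → X 1 - c' + c' * s ≤ X s := by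
    intro s hs
    have := hmono3 (self_mem_Ici) (mem_Ici.2 hs) hs
    simp only at this
    nlinarith [this]
  have hXtop : Tendsto X atTop atTop := by
    apply tendsto_atTop_mono' atTop
      (eventually_atTop.2 ⟨1, fun s hs => hXlow s hs⟩)
    exact tendsto_atTop_add_const_left _ _ (tendsto_id.const_mul_atTop hc')
  exact ⟨part1, hXtop, hYtend⟩

end Stmt6Aux


open Stmt6Aux

/-- h-catenoids: if `h ≤ 0` on `[-1,1]` and `h(±1) = 0`, the maximal orbit of
`F₁` through `(x₀,0)` is defined on all of `ℝ`, has strictly increasing `y`-coordinate,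
`x` attains its strict global minimum `x₀` at `s = 0`, and `x(s) → ∞`, `y(s) → ±1` as
`s → ±∞`. -/
theorem stmt6 (h : ℝ → ℝ) (hC : ContDiffOn ℝ 1 h (Set.Icc (-1 : ℝ) 1))
    (hle : ∀ y ∈ Set.Icc (-1 : ℝ) 1, h y ≤ 0) (hm1 : h (-1) = 0) (hp1 : h 1 = 0)
    (x₀ : ℝ) (hx₀ : 0 < x₀) (a b : EReal) (γ : ℝ → ℝ × ℝ)
    (horb : IsMaxOrbitOn h 1 γ (EIoo a b)) (hmem : (0 : ℝ) ∈ EIoo a b)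
    (hinit : γ 0 = (x₀, 0)) :
    a = ⊥ ∧ b = ⊤ ∧
    StrictMono (fun s => (γ s).2) ∧
    (γ 0).1 = x₀ ∧ (∀ s : ℝ, s ≠ 0 → x₀ < (γ s).1) ∧
    Filter.Tendsto (fun s => (γ s).1) Filter.atTop Filter.atTop ∧
    Filter.Tendsto (fun s => (γ s).1) Filter.atBot Filter.atTop ∧
    Filter.Tendsto (fun s => (γ s).2) Filter.atTop (nhds (1 : ℝ)) ∧
    Filter.Tendsto (fun s => (γ s).2) Filter.atBot (nhds (-1 : ℝ)) := by
  -- data for the reflected system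
  have hC' : ContDiffOn ℝ 1 (reflh h) (Set.Icc (-1 : ℝ) 1) := by
    have he : reflh h = h ∘ (fun z : ℝ => -z) := rfl
    rw [he]
    exact hC.comp (contDiff_neg.contDiffOn)
      (fun z hz => ⟨by linarith [hz.2], by linarith [hz.1]⟩)
  have hle' : ∀ z ∈ Set.Icc (-1 : ℝ) 1, reflh h z ≤ 0 := fun z hz =>
    hle (-z) ⟨by linarith [hz.2], by linarith [hz.1]⟩
  have hp1' : reflh h 1 = 0 := by simpa [reflh] using hm1
  have horb' := isMaxOrbitOn_refl horb
  have hmem' : (0 : ℝ) ∈ EIoo (-b) (-a) := mem_neg_EIoo.2 (by rw [neg_zero]; exact hmem)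
  have hinit' : reflOrbit γ 0 = (x₀, 0) := by simp [reflOrbit, hinit]
  -- the interval is all of ℝ
  have hb : b = ⊤ := key hC hle hp1 hx₀ horb hmem hinit
  have ha : a = ⊥ := by
    have := key hC' hle' hp1' hx₀ horb' hmem' hinit'
    exact EReal.neg_eq_top_iff.1 this
  subst hb; subst ha
  have hsol : ∀ s : ℝ, γ s ∈ PhasePlane ∧ HasDerivAt γ (F h 1 (γ s)) s := fun s =>
    horb.1.2.2 s ⟨EReal.bot_lt_coe s, EReal.coe_lt_top s⟩
  have hsol' : ∀ s : ℝ, reflOrbit γ s ∈ PhasePlane ∧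
      HasDerivAt (reflOrbit γ) (F (reflh h) 1 (reflOrbit γ s)) s := by
    have horbu : IsOrbitOn h 1 γ Set.univ :=
      ⟨isOpen_univ, Set.ordConnected_univ, fun s _ => hsol s⟩
    have := isOrbitOn_refl horbu
    exact fun s => this.2.2 s (by trivial)
  obtain ⟨h1, hXtop, hYtop⟩ := asymp hle hx₀ hsol hinit
  obtain ⟨h1', hXtop', hYtop'⟩ := asymp hle' hx₀ hsol' hinit'
  refine ⟨rfl, rfl, ?_, ?_, ?_, ?_, ?_, ?_, ?_⟩
  · apply strictMono_of_deriv_pos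
    intro s
    rw [(hasDerivAt_snd (hsol s).2).deriv]
    exact F_snd_pos hle (hsol s).1
  · rw [hinit]
  · intro s hs
    rcases lt_or_gt_of_ne hs with hneg | hpos
    · have := h1' (-s) (by linarith)
      simpa [reflOrbit] using this
    · exact h1 s hpos
  · exact hXtop
  · have h2 := hXtop'.comp tendsto_neg_atBot_atTop
    have he : ((fun s => (reflOrbit γ s).1) ∘ Neg.neg) = fun s => (γ s).1 := by
      funext s; simp [reflOrbit]
    rwa [he] at h2
  · exact hYtop
  · have h2 := (hYtop'.comp tendsto_neg_atBot_atTop).neg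
    have he : (fun s => -((fun s => (reflOrbit γ s).2) ∘ Neg.neg) s) = fun s => (γ s).2 := by
      funext s; simp [reflOrbit]
    rwa [he] at h2
end

section
/- Let h : [-1,1] → ℝ be C¹ with h'(y) ≠ 0 for every y ∈ (-1,1), and let ε ∈ {-1,1}. Then the system γ' = F_ε∘γ has no closed orbit in Θ: there is no nonconstant periodic solution γ : ℝ → Θ of γ'(s) = F_ε(γ(s)). -/
open Filter Set

/-- Bendixson–Dulac: if `h' ≠ 0` on `(-1,1)`, the system `γ' = F_ε ∘ γ`
has no nonconstant periodic solution in the phase plane. -/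
theorem stmt7 (h : ℝ → ℝ) (hC : ContDiffOn ℝ 1 h (Set.Icc (-1 : ℝ) 1))
    (hd : ∀ y ∈ Set.Ioo (-1 : ℝ) 1, deriv h y ≠ 0) (ε : ℝ) (hε : ε = 1 ∨ ε = -1) :
    ¬ ∃ (γ : ℝ → ℝ × ℝ) (T : ℝ), 0 < T ∧
        (∀ s : ℝ, γ s ∈ PhasePlane) ∧
        (∀ s : ℝ, HasDerivAt γ (F h ε (γ s)) s) ∧
        (∀ s : ℝ, γ (s + T) = γ s) ∧
        (∃ s t : ℝ, γ s ≠ γ t) := by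
  have hε2 : ε * ε = 1 := by rcases hε with rfl | rfl <;> norm_num
  have h0mem : (0 : ℝ) ∈ Set.Ioo (-1 : ℝ) 1 := by norm_num
  -- continuity of `deriv h` on the open interval
  have hderivCont : ContinuousOn (deriv h) (Set.Ioo (-1 : ℝ) 1) := by
    have h1 : ContinuousOn (derivWithin h (Set.Icc (-1 : ℝ) 1)) (Set.Icc (-1 : ℝ) 1) :=
      hC.continuousOn_derivWithin (uniqueDiffOn_Icc (by norm_num : (-1:ℝ) < 1)) le_rfl
    refine (h1.mono Set.Ioo_subset_Icc_self).congr ?_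
    intro y hy
    exact (derivWithin_of_mem_nhds (Icc_mem_nhds hy.1 hy.2) : derivWithin h _ y = deriv h y).symm
  -- `deriv h` has constant sign on the interval
  have key : ∀ a ∈ Set.Ioo (-1 : ℝ) 1, ∀ b ∈ Set.Ioo (-1 : ℝ) 1,
      deriv h a < 0 → 0 < deriv h b → False := by
    intro a ha b hb ha' hb'
    have hsub : Set.uIcc a b ⊆ Set.Ioo (-1 : ℝ) 1 := (Set.ordConnected_Ioo).uIcc_subset ha hb
    have h0 : (0 : ℝ) ∈ Set.uIcc (deriv h a) (deriv h b) := by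
      rw [Set.mem_uIcc]; left; exact ⟨ha'.le, hb'.le⟩
    obtain ⟨c, hc, hc0⟩ := intermediate_value_uIcc (hderivCont.mono hsub) h0
    exact hd c (hsub hc) hc0
  have hsign : (∀ y ∈ Set.Ioo (-1 : ℝ) 1, 0 < deriv h y) ∨
      (∀ y ∈ Set.Ioo (-1 : ℝ) 1, deriv h y < 0) := by
    rcases lt_or_gt_of_ne (hd 0 h0mem) with hneg | hpos
    · right
      intro y hy
      rcases lt_or_gt_of_ne (hd y hy) with hy' | hy'
      · exact hy'
      · exact absurd (key 0 h0mem y hy hneg hy') (by simp)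
    · left
      intro y hy
      rcases lt_or_gt_of_ne (hd y hy) with hy' | hy'
      · exact absurd (key y hy 0 h0mem hy' hpos) (by simp)
      · exact hy'
  -- strict sign of `(h y - h 0) * y`
  obtain ⟨c, hc1, hkey⟩ : ∃ c : ℝ, (c = 1 ∨ c = -1) ∧
      ∀ y ∈ Set.Ioo (-1 : ℝ) 1, y ≠ 0 → 0 < c * ((h y - h 0) * y) := by
    rcases hsign with hs | hs
    · refine ⟨1, Or.inl rfl, ?_⟩
      have hm : StrictMonoOn h (Set.Ioo (-1 : ℝ) 1) :=
        strictMonoOn_of_deriv_pos (convex_Ioo _ _)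
          (hC.continuousOn.mono Set.Ioo_subset_Icc_self)
          (by rw [interior_Ioo]; exact hs)
      intro y hy hy0
      rcases lt_or_gt_of_ne hy0 with h1 | h1
      · have := hm hy h0mem h1
        nlinarith
      · have := hm h0mem hy h1
        nlinarith
    · refine ⟨-1, Or.inr rfl, ?_⟩
      have hm : StrictAntiOn h (Set.Ioo (-1 : ℝ) 1) :=
        strictAntiOn_of_deriv_neg (convex_Ioo _ _)
          (hC.continuousOn.mono Set.Ioo_subset_Icc_self)
          (by rw [interior_Ioo]; exact hs)
      intro y hy hy0
      rcases lt_or_gt_of_ne hy0 with h1 | h1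
      · have := hm hy h0mem h1
        nlinarith
      · have := hm h0mem hy h1
        nlinarith
  rintro ⟨γ, T, hT, hΘ, hode, hper, s₁, t₁, hne⟩
  set X : ℝ → ℝ := fun s => (γ s).1 with hXdef
  set Y : ℝ → ℝ := fun s => (γ s).2 with hYdef
  have hXpos : ∀ s, 0 < X s := fun s => (hΘ s).1
  have hYmem : ∀ s, Y s ∈ Set.Ioo (-1 : ℝ) 1 := fun s => (hΘ s).2
  have hX : ∀ s, HasDerivAt X (Y s) s := by
    intro s
    have := ((ContinuousLinearMap.fst ℝ ℝ ℝ).hasFDerivAt.comp s (hode s).hasFDerivAt).hasDerivAt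
    simp [F] at this
    convert this using 1
    · rfl
    · rfl
    · rfl
  have hY : ∀ s, HasDerivAt Y
      ((1 - Y s ^ 2) / Real.tanh (X s) - 2 * ε * h (Y s) * Real.sqrt (1 - Y s ^ 2)) s := by
    intro s
    have := ((ContinuousLinearMap.snd ℝ ℝ ℝ).hasFDerivAt.comp s (hode s).hasFDerivAt).hasDerivAt
    simp [F] at this
    convert this using 1
    · rfl
    · rfl
    · rfl
  have h1y : ∀ s, (0 : ℝ) < 1 - Y s ^ 2 := by
    intro s
    obtain ⟨h1, h2⟩ := hYmem s
    nlinarith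
  -- some s₀ with `Y s₀ ≠ 0`, else γ is constant
  obtain ⟨s₀, hs₀⟩ : ∃ s₀, Y s₀ ≠ 0 := by
    by_contra hcon
    push_neg at hcon
    have hX0 : ∀ s, HasDerivAt X 0 s := fun s => hcon s ▸ hX s
    have hXc : X s₁ = X t₁ :=
      is_const_of_deriv_eq_zero (fun s => (hX0 s).differentiableAt)
        (fun s => (hX0 s).deriv) s₁ t₁
    apply hne
    have e1 : γ s₁ = (X s₁, Y s₁) := rfl
    have e2 : γ t₁ = (X t₁, Y t₁) := rfl
    rw [e1, e2, hXc, hcon s₁, hcon t₁]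
  -- the key function and its derivative along the orbit
  set f : ℝ → ℝ := fun s => 2 * ε * (h (Y s) - h 0) * Y s * Real.sinh (X s) with hfdef
  set M : ℝ → ℝ :=
    fun s => Real.sinh (X s) * Real.sqrt (1 - Y s ^ 2) - 2 * ε * h 0 * Real.cosh (X s) with hMdef
  have hM : ∀ s, HasDerivAt M (f s) s := by
    intro s
    set D : ℝ := (1 - Y s ^ 2) / Real.tanh (X s) - 2 * ε * h (Y s) * Real.sqrt (1 - Y s ^ 2)
      with hDdef
    have hquad : HasDerivAt (fun t => 1 - Y t ^ 2) (-(2 * Y s ^ 1 * D)) s :=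
      ((hY s).pow 2).const_sub 1
    have hsq : HasDerivAt (fun t => Real.sqrt (1 - Y t ^ 2))
        (-(2 * Y s ^ 1 * D) / (2 * Real.sqrt (1 - Y s ^ 2))) s :=
      hquad.sqrt (h1y s).ne'
    have hsinh : HasDerivAt (fun t => Real.sinh (X t)) (Real.cosh (X s) * Y s) s :=
      (Real.hasDerivAt_sinh (X s)).comp s (hX s)
    have hcosh : HasDerivAt (fun t => Real.cosh (X t)) (Real.sinh (X s) * Y s) s :=
      (Real.hasDerivAt_cosh (X s)).comp s (hX s)
    have hMder := (hsinh.mul hsq).sub (hcosh.const_mul (2 * ε * h 0))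
    convert hMder using 1
    case e'_4 => rfl
    case e'_5 => rfl
    case e'_8 => rfl
    -- the algebraic identity
    have hxpos := hXpos s
    have hq2 : Real.sqrt (1 - Y s ^ 2) ^ 2 = 1 - Y s ^ 2 := Real.sq_sqrt (h1y s).le
    have hqpos : 0 < Real.sqrt (1 - Y s ^ 2) := Real.sqrt_pos.mpr (h1y s)
    have hcoshpos : 0 < Real.cosh (X s) := Real.cosh_pos (X s)
    have hsinhpos : 0 < Real.sinh (X s) := Real.sinh_pos_iff.mpr hxpos
    rw [hDdef, Real.tanh_eq_sinh_div_cosh]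
    field_simp
    linear_combination (-(Y s * Real.cosh (X s))) * hq2
  -- continuity of f
  have hXc : Continuous X := by
    rw [continuous_iff_continuousAt]; exact fun s => (hX s).continuousAt
  have hYc : Continuous Y := by
    rw [continuous_iff_continuousAt]; exact fun s => (hY s).continuousAt
  have hhY : Continuous fun s => h (Y s) :=
    hC.continuousOn.comp_continuous hYc fun s => Set.Ioo_subset_Icc_self (hYmem s)
  have hfc : Continuous f := by
    exact ((continuous_const.mul (hhY.sub continuous_const)).mul hYc).mul
      (Real.continuous_sinh.comp hXc)
  -- the integral of f over one period vanishes
  have hint : ∫ s in s₀..(s₀ + T), f s = M (s₀ + T) - M s₀ :=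
    intervalIntegral.integral_eq_sub_of_hasDerivAt (fun x _ => hM x)
      (hfc.intervalIntegrable _ _)
  have hMper : M (s₀ + T) = M s₀ := by
    have hp := hper s₀
    simp only [hMdef, hXdef, hYdef, hp]
  rw [hMper, sub_self] at hint
  -- but the sign-corrected integrand is nonnegative and positive at s₀
  set g : ℝ → ℝ := fun s => (c * ε) * f s with hgdef
  have hgpos : ∀ s, Y s ≠ 0 → 0 < g s := by
    intro s hy
    have hsh : 0 < Real.sinh (X s) := Real.sinh_pos_iff.mpr (hXpos s)
    have hpos := hkey (Y s) (hYmem s) hy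
    have heq : g s = 2 * (ε * ε) * (c * ((h (Y s) - h 0) * Y s)) * Real.sinh (X s) := by
      simp only [hgdef, hfdef]; ring
    rw [heq, hε2]
    nlinarith [mul_pos hpos hsh]
  have hgnn : ∀ s, 0 ≤ g s := by
    intro s
    rcases eq_or_ne (Y s) 0 with hy | hy
    · simp [hgdef, hfdef, hy]
    · exact (hgpos s hy).le
  have hgc : Continuous g := continuous_const.mul hfc
  have hgint : ∫ s in s₀..(s₀ + T), g s = 0 := by
    rw [hgdef]
    rw [intervalIntegral.integral_const_mul, hint, mul_zero]
  have hgintpos : 0 < ∫ s in s₀..(s₀ + T), g s := by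
    rw [intervalIntegral.integral_pos_iff_support_of_nonneg_ae
      (Filter.Eventually.of_forall hgnn) (hgc.intervalIntegrable _ _)]
    refine ⟨by linarith, ?_⟩
    -- a small interval to the right of s₀ lies in the support of g
    have hU : IsOpen (g ⁻¹' Set.Ioi 0) := isOpen_Ioi.preimage hgc
    have hs₀U : s₀ ∈ g ⁻¹' Set.Ioi 0 := hgpos s₀ hs₀
    obtain ⟨δ, hδ, hball⟩ := Metric.isOpen_iff.mp hU s₀ hs₀U
    set δ' : ℝ := min δ T with hδ'def
    have hδ'pos : 0 < δ' := lt_min hδ hT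
    have hsub : Set.Ioo s₀ (s₀ + δ') ⊆ Function.support g ∩ Set.Ioc s₀ (s₀ + T) := by
      intro u hu
      constructor
      · have : u ∈ Metric.ball s₀ δ := by
          rw [Metric.mem_ball, Real.dist_eq, abs_lt]
          constructor
          · linarith [hu.1]
          · have : u < s₀ + δ' := hu.2
            have : δ' ≤ δ := min_le_left _ _
            linarith [hu.2]
        exact ne_of_gt (hball this)
      · exact ⟨hu.1, by have : δ' ≤ T := min_le_right _ _; linarith [hu.2.le]⟩
    calc (0 : ENNReal) < ENNReal.ofReal δ' := by
          exact ENNReal.ofReal_pos.mpr hδ'pos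
      _ = MeasureTheory.volume (Set.Ioo s₀ (s₀ + δ')) := by
          rw [Real.volume_Ioo]; congr 1; ring
      _ ≤ MeasureTheory.volume (Function.support g ∩ Set.Ioc s₀ (s₀ + T)) :=
          MeasureTheory.measure_mono hsub
  rw [hgint] at hgintpos
  exact lt_irrefl 0 hgintpos
end

section
/- Let h : [-1,1] → ℝ be C¹ and ε ∈ {-1,1}. Define on Θ = (0,∞) × (-1,1) the function α(x,y) = sinh(x)/√(1-y²) and the vector field V = α·F_ε, i.e. V(x,y) = (α(x,y)·y, α(x,y)·((1-y²)/tanh(x) − 2ε·h(y)·√(1-y²))). Then the divergence of V satisfies ∂ₓ(V₁)(x,y) + ∂_y(V₂)(x,y) = −2ε·h'(y)·sinh(x) for every (x,y) ∈ Θ. -/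
open Filter Set

/-- the divergence of the Dulac-rescaled field `V = α·F_ε`, with
`α(x,y) = sinh x / √(1-y²)`, equals `−2ε·h'(y)·sinh x` on the phase plane. -/
theorem stmt8 (h : ℝ → ℝ) (hC : ContDiffOn ℝ 1 h (Set.Icc (-1 : ℝ) 1))
    (ε : ℝ) (hε : ε = 1 ∨ ε = -1) :
    ∀ x y : ℝ, (x, y) ∈ PhasePlane →
      deriv (fun t => (Real.sinh t / Real.sqrt (1 - y ^ 2)) * y) x +
      deriv (fun u => (Real.sinh x / Real.sqrt (1 - u ^ 2)) *
          ((1 - u ^ 2) / Real.tanh x - 2 * ε * h u * Real.sqrt (1 - u ^ 2))) y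
      = -2 * ε * deriv h y * Real.sinh x := by
  intro x y hxy
  obtain ⟨hx, hy⟩ := hxy
  simp only [Set.mem_Ioi] at hx
  have hy2 : (0:ℝ) < 1 - y ^ 2 := by nlinarith [hy.1, hy.2]
  set c := Real.sqrt (1 - y ^ 2) with hcdef
  have hc : 0 < c := Real.sqrt_pos.mpr hy2
  have hc2 : c ^ 2 = 1 - y ^ 2 := Real.sq_sqrt hy2.le
  -- first derivative
  have d1 : deriv (fun t => Real.sinh t / c * y) x = Real.cosh x / c * y :=
    (((Real.hasDerivAt_sinh x).div_const c).mul_const y).deriv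
  -- h differentiable at y
  have hdiff : DifferentiableAt ℝ h y :=
    (hC.differentiableOn one_ne_zero).differentiableAt
      (Icc_mem_nhds (by linarith [hy.1]) (by linarith [hy.2]))
  -- derivative of u ↦ √(1-u²)
  have hsq : HasDerivAt (fun u : ℝ => Real.sqrt (1 - u ^ 2)) (-y / c) y := by
    have h1 : HasDerivAt (fun u : ℝ => 1 - u ^ 2) (-(2 * y)) y := by
      simpa using (hasDerivAt_pow 2 y).const_sub 1
    have h2 := (Real.hasDerivAt_sqrt (ne_of_gt hy2)).comp y h1
    refine h2.congr_deriv ?_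
    rw [← hcdef]
    field_simp
  -- the second function equals g near y
  set g : ℝ → ℝ := fun u => Real.cosh x * Real.sqrt (1 - u ^ 2) - 2 * ε * Real.sinh x * h u
    with hgdef
  have hg : HasDerivAt g (Real.cosh x * (-y / c) - 2 * ε * Real.sinh x * deriv h y) y :=
    (hsq.const_mul _).sub (hdiff.hasDerivAt.const_mul _)
  have hsinh : Real.sinh x ≠ 0 := ne_of_gt (by positivity)
  have hcosh : Real.cosh x ≠ 0 := ne_of_gt (Real.cosh_pos x)
  have heq : (fun u => (Real.sinh x / Real.sqrt (1 - u ^ 2)) *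
      ((1 - u ^ 2) / Real.tanh x - 2 * ε * h u * Real.sqrt (1 - u ^ 2))) =ᶠ[nhds y] g := by
    filter_upwards [Ioo_mem_nhds hy.1 hy.2] with u hu
    have hu2 : (0:ℝ) < 1 - u ^ 2 := by nlinarith [hu.1, hu.2]
    have hs : (0:ℝ) < Real.sqrt (1 - u ^ 2) := Real.sqrt_pos.mpr hu2
    have hs2 : Real.sqrt (1 - u ^ 2) ^ 2 = 1 - u ^ 2 := Real.sq_sqrt hu2.le
    simp only [hgdef]
    rw [← hs2, Real.tanh_eq_sinh_div_cosh]
    field_simp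
    rw [Real.sqrt_sq hs.le]
    linear_combination
  have d2 : deriv (fun u => (Real.sinh x / Real.sqrt (1 - u ^ 2)) *
      ((1 - u ^ 2) / Real.tanh x - 2 * ε * h u * Real.sqrt (1 - u ^ 2))) y
      = Real.cosh x * (-y / c) - 2 * ε * Real.sinh x * deriv h y := by
    rw [heq.deriv_eq, hg.deriv]
  rw [d1, d2]
  field_simp
  ring
end
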